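/- arXiv:2509.21809 — 9 statements merged into one kernel-verified Lean document; each statement's English description precedes it below -/
import Mathlib

section
/- Let f be a real number and let g be the 3×3 real matrix with rows (0,0,1), (0,1,0), (1,0,f). A 3×3 real matrix φ satisfies φᵀ·g = −g·φ if and only if there exist real numbers a₁, a₂, b₁ such that φ is the matrix with rows (a₁, b₁, f·a₁), (a₂, 0, −b₁ + f·a₂), (0, −a₂, −a₁). (This is the normal form (3.8), established in the proof of Theorem 3.1, of an endomorphism that is g-skew-adjoint with respect to the 3-dimensional Walker metric with ε = 1.) -/
open Matrix

/-- Normal form (3.8) of a `g`-skew-adjoint endomorphism with respect to the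
3-dimensional Walker metric `g = [[0,0,1],[0,1,0],[1,0,f]]` (case `ε = 1`). -/
theorem walker_skew_adjoint_normal_form (f : ℝ) (φ : Matrix (Fin 3) (Fin 3) ℝ) :
    φᵀ * !![0, 0, 1; 0, 1, 0; 1, 0, f] = -(!![0, 0, 1; 0, 1, 0; 1, 0, f] * φ) ↔
    ∃ a₁ a₂ b₁ : ℝ, φ = !![a₁, b₁, f * a₁; a₂, 0, -b₁ + f * a₂; 0, -a₂, -a₁] := by
  constructor
  · intro h
    refine ⟨φ 0 0, φ 1 0, φ 0 1, ?_⟩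
    have h' := fun i j => congrFun (congrFun h i) j
    have e00 := h' 0 0; have e01 := h' 0 1; have e02 := h' 0 2
    have e10 := h' 1 0; have e11 := h' 1 1; have e12 := h' 1 2
    have e20 := h' 2 0; have e21 := h' 2 1; have e22 := h' 2 2
    simp [Matrix.mul_apply, Matrix.vecMul, dotProduct, Fin.sum_univ_three, Matrix.transpose_apply] at e00 e01 e02 e10 e11 e12 e20 e21 e22
    ext i j
    fin_cases i <;> fin_cases j <;>
      simp [Matrix.vecHead, Matrix.vecTail] <;>
      first
        | linarith
        | linear_combination e22 / 2 - f * e20 + f ^ 2 * e00 / 2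
        | linear_combination e21 - f * e10
        | linear_combination e20 - f * e00 / 2
  · rintro ⟨a₁, a₂, b₁, rfl⟩
    ext i j
    fin_cases i <;> fin_cases j <;>
      simp [Matrix.mul_apply, Fin.sum_univ_three, Matrix.vecHead, Matrix.vecTail] <;> ring
end

section
/- Let f, ξ₁, ξ₂, ξ₃ be real numbers satisfying ξ₂² + f·ξ₃² + 2ξ₁ξ₃ = 1. Let g be the 3×3 real matrix with rows (0,0,1), (0,1,0), (1,0,f), let ξ = (ξ₁,ξ₂,ξ₃)ᵀ and η = g·ξ = (ξ₃, ξ₂, ξ₁ + fξ₃)ᵀ. Then a 3×3 real matrix φ satisfies both φᵀ·g = −g·φ and φ² = I₃ − ξ·ηᵀ (i.e. (φ²)ᵢⱼ = δᵢⱼ − ξᵢηⱼ) if and only if φ = A or φ = −A, where A is the matrix with rows (−ξ₂, ξ₁ + fξ₃, −f·ξ₂), (ξ₃, 0, −ξ₁), (0, −ξ₃, ξ₂). (Theorem 3.1, case ε = 1: existence and pointwise classification of almost paracontact metric structures on a 3-dimensional Walker manifold.) -/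
open Matrix

private lemma mat3_eq' (M : Matrix (Fin 3) (Fin 3) ℝ) (a b c d e g h i j : ℝ)
    (h00 : M 0 0 = a) (h01 : M 0 1 = b) (h02 : M 0 2 = c)
    (h10 : M 1 0 = d) (h11 : M 1 1 = e) (h12 : M 1 2 = g)
    (h20 : M 2 0 = h) (h21 : M 2 1 = i) (h22 : M 2 2 = j) :
    M = !![a,b,c;d,e,g;h,i,j] := by
  ext x y
  fin_cases x <;> fin_cases y <;> simp <;> assumption

/-- Theorem 3.1, case `ε = 1`: with `g = [[0,0,1],[0,1,0],[1,0,f]]`, `ξ = (ξ₁,ξ₂,ξ₃)`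
satisfying `ξ₂² + fξ₃² + 2ξ₁ξ₃ = 1` and `η = gξ = (ξ₃, ξ₂, ξ₁ + fξ₃)`, a matrix `φ`
satisfies `φᵀg = -gφ` and `φ² = I - ξηᵀ` iff `φ = ±A` where
`A = [[-ξ₂, ξ₁+fξ₃, -fξ₂],[ξ₃,0,-ξ₁],[0,-ξ₃,ξ₂]]`. -/
theorem walker_apcm_structures (f ξ₁ ξ₂ ξ₃ : ℝ)
    (hconstr : ξ₂ ^ 2 + f * ξ₃ ^ 2 + 2 * ξ₁ * ξ₃ = 1)
    (φ : Matrix (Fin 3) (Fin 3) ℝ) :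
    (φᵀ * !![0, 0, 1; 0, 1, 0; 1, 0, f] = -(!![0, 0, 1; 0, 1, 0; 1, 0, f] * φ) ∧
      φ * φ = 1 - Matrix.vecMulVec ![ξ₁, ξ₂, ξ₃] ![ξ₃, ξ₂, ξ₁ + f * ξ₃]) ↔
    (φ = !![-ξ₂, ξ₁ + f * ξ₃, -(f * ξ₂); ξ₃, 0, -ξ₁; 0, -ξ₃, ξ₂] ∨
      φ = -(!![-ξ₂, ξ₁ + f * ξ₃, -(f * ξ₂); ξ₃, 0, -ξ₁; 0, -ξ₃, ξ₂])) := by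
  constructor
  · rintro ⟨h1, h2⟩
    have e1 := fun i j => congrFun (congrFun h1 i) j
    have e2 := fun i j => congrFun (congrFun h2 i) j
    simp only [Matrix.mul_apply, Fin.sum_univ_three, Matrix.transpose_apply, Matrix.neg_apply,
      Matrix.sub_apply, Matrix.one_apply, vecMulVec_apply, Matrix.cons_val', Matrix.cons_val_zero,
      Matrix.cons_val_one, Matrix.head_cons, Matrix.empty_val', Matrix.cons_val_fin_one,
      Matrix.head_fin_const, Matrix.cons_val_two, Matrix.tail_cons] at e1 e2
    have a00 := e1 0 0; have a10 := e1 1 0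
    have a11 := e1 1 1; have a20 := e1 2 0; have a21 := e1 2 1; have a22 := e1 2 2
    have b00 := e2 0 0; have b01 := e2 0 1; have b10 := e2 1 0; have b11 := e2 1 1
    have b20 := e2 2 0
    norm_num [Fin.ext_iff, ] at a00 a10 a11 a20 a21 a22 b00 b01 b10 b11 b20
    simp at a00 a10 a11 a20 a21 a22 b20
    have h20' : φ 2 0 = 0 := by linarith
    have h11' : φ 1 1 = 0 := by linarith
    have h21' : φ 2 1 = -φ 1 0 := by linear_combination a10
    have h22' : φ 2 2 = -φ 0 0 := by linear_combination a20 - f * h20'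
    have h12' : φ 1 2 = -φ 0 1 + f * φ 1 0 := by linear_combination a21 - f * h21'
    have h02' : φ 0 2 = f * φ 0 0 := by linear_combination (1/2) * a22 - f * h22'
    have Qy : φ 1 0 ^ 2 = ξ₃ ^ 2 := by
      linear_combination -b20 + (φ 0 0 + φ 2 2) * h20' + φ 1 0 * h21'
    have Qxy : φ 0 0 * φ 1 0 = -(ξ₂ * ξ₃) := by
      linear_combination b10 - φ 1 0 * h11' - φ 1 2 * h20'
    have Qyz : φ 1 0 * φ 0 1 = f * ξ₃ ^ 2 + ξ₁ * ξ₃ := by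
      linear_combination (1/2) * b11 - (1/2) * φ 1 1 * h11' - (1/2) * φ 2 1 * h12'
        + (1/2) * (φ 0 1 - f * φ 1 0) * h21' + (f/2) * Qy - (1/2) * hconstr
    have Qxz : φ 0 0 * (φ 0 1 - f * φ 1 0) = -(ξ₁ * ξ₂) := by
      linear_combination b01 - φ 0 1 * h11' - φ 2 1 * h02' - f * φ 0 0 * h21'
    have Qx : φ 0 0 ^ 2 = ξ₂ ^ 2 := by
      linear_combination b00 - Qyz - φ 0 2 * h20' - hconstr
    have negA : -(!![-ξ₂, ξ₁ + f * ξ₃, -(f * ξ₂); ξ₃, 0, -ξ₁; 0, -ξ₃, ξ₂]) =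
        !![ξ₂, -(ξ₁ + f * ξ₃), f * ξ₂; -ξ₃, 0, ξ₁; 0, ξ₃, -ξ₂] := by
      ext x y; fin_cases x <;> fin_cases y <;> simp
    rcases eq_or_ne ξ₃ 0 with hξ₃0 | hξ₃
    · -- ξ₃ = 0
      have hy0 : φ 1 0 = 0 := by
        have h : φ 1 0 ^ 2 = 0 := by rw [Qy, hξ₃0]; ring
        exact pow_eq_zero_iff two_ne_zero |>.mp h
      have hξ₂ : ξ₂ ≠ 0 := by
        intro h; rw [h, hξ₃0] at hconstr; norm_num at hconstr
      have hfac : (φ 0 0 - ξ₂) * (φ 0 0 + ξ₂) = 0 := by linear_combination Qx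
      rcases mul_eq_zero.mp hfac with h | h
      · -- φ00 = ξ₂ : right case
        right
        have hx : φ 0 0 = ξ₂ := by linarith [sub_eq_zero.mp h]
        have hy : φ 1 0 = -ξ₃ := by rw [hy0, hξ₃0, neg_zero]
        have hz : φ 0 1 = -(ξ₁ + f * ξ₃) := by
          refine mul_left_cancel₀ hξ₂ ?_
          linear_combination Qxz - φ 0 1 * hx + f * φ 0 0 * hy0 + f * ξ₂ * hξ₃0
        rw [negA]
        exact mat3_eq' φ _ _ _ _ _ _ _ _ _ hx (by linear_combination hz)
          (by linear_combination h02' + f * hx)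
          hy h11' (by linear_combination h12' - hz + f * hy) h20'
          (by linear_combination h21' - hy) (by linear_combination h22' - hx)
      · -- φ00 = -ξ₂ : left case
        left
        have hx : φ 0 0 = -ξ₂ := by linarith
        have hy : φ 1 0 = ξ₃ := by rw [hy0, hξ₃0]
        have hz : φ 0 1 = ξ₁ + f * ξ₃ := by
          refine mul_left_cancel₀ hξ₂ ?_
          linear_combination -Qxz + φ 0 1 * hx - f * φ 0 0 * hy0 - f * ξ₂ * hξ₃0
        exact mat3_eq' φ _ _ _ _ _ _ _ _ _ hx hz (by linear_combination h02' + f * hx)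
          hy h11' (by linear_combination h12' - hz + f * hy) h20'
          (by linear_combination h21' - hy) (by linear_combination h22' - hx)
    · -- ξ₃ ≠ 0
      have hfac : (φ 1 0 - ξ₃) * (φ 1 0 + ξ₃) = 0 := by linear_combination Qy
      rcases mul_eq_zero.mp hfac with h | h
      · -- φ10 = ξ₃ : left case
        left
        have hy : φ 1 0 = ξ₃ := sub_eq_zero.mp h
        have hx : φ 0 0 = -ξ₂ := by
          refine mul_right_cancel₀ hξ₃ ?_
          linear_combination Qxy - φ 0 0 * hy
        have hz : φ 0 1 = ξ₁ + f * ξ₃ := by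
          refine mul_left_cancel₀ hξ₃ ?_
          linear_combination Qyz - φ 0 1 * hy
        exact mat3_eq' φ _ _ _ _ _ _ _ _ _ hx hz (by linear_combination h02' + f * hx)
          hy h11' (by linear_combination h12' - hz + f * hy) h20'
          (by linear_combination h21' - hy) (by linear_combination h22' - hx)
      · -- φ10 = -ξ₃ : right case
        right
        have hy : φ 1 0 = -ξ₃ := by linarith
        have hx : φ 0 0 = ξ₂ := by
          refine mul_right_cancel₀ hξ₃ ?_
          linear_combination -Qxy + φ 0 0 * hy
        have hz : φ 0 1 = -(ξ₁ + f * ξ₃) := by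
          refine mul_left_cancel₀ hξ₃ ?_
          linear_combination -Qyz + φ 0 1 * hy
        rw [negA]
        exact mat3_eq' φ _ _ _ _ _ _ _ _ _ hx (by linear_combination hz)
          (by linear_combination h02' + f * hx)
          hy h11' (by linear_combination h12' - hz + f * hy) h20'
          (by linear_combination h21' - hy) (by linear_combination h22' - hx)
  · rintro (rfl | rfl) <;>
    constructor <;>
    · ext i j
      fin_cases i <;> fin_cases j <;>
        simp only [Matrix.mul_apply, Fin.sum_univ_three, Matrix.transpose_apply, Matrix.neg_apply,
          Matrix.sub_apply, Matrix.one_apply, Matrix.vecMulVec_apply, Fin.zero_eta, Fin.mk_one,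
          Matrix.cons_val', Matrix.cons_val_zero, Matrix.cons_val_one, Matrix.head_cons,
          Matrix.empty_val', Matrix.cons_val_fin_one, Matrix.head_fin_const, Fin.isValue,
          Matrix.cons_val_two, Matrix.tail_cons, Fin.reduceEq, if_true, if_false,
          Fin.reduceFinMk] <;>
        norm_num [Fin.ext_iff] <;>
          simp <;>
        first
          | ring1
          | linear_combination hconstr
          | linear_combination -hconstr
          | linear_combination ξ₁ * hconstr
          | linear_combination -ξ₁ * hconstr
          | linarith [hconstr]
end

section
/- Let f, ξ₁, ξ₂, ξ₃ be arbitrary real numbers and let g be the 3×3 real matrix with rows (0,0,1), (0,−1,0), (1,0,f). Then there is no 3×3 real matrix φ such that ξᵀ·g·ξ = 1 (where ξ = (ξ₁,ξ₂,ξ₃)ᵀ), φᵀ·g = −g·φ, and φ² = I₃ − ξ·(gξ)ᵀ. (Theorem 3.1, case ε = −1: there exist no almost paracontact metric structures on a 3-dimensional Walker manifold whose metric has ε = −1.) -/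
open Matrix

/-- Theorem 3.1, case `ε = -1`: there exist no almost paracontact metric structures on
a 3-dimensional Walker manifold whose metric is `g = [[0,0,1],[0,-1,0],[1,0,f]]`. -/
theorem no_apcm_structure_eps_neg (f ξ₁ ξ₂ ξ₃ : ℝ) :
    ¬ ∃ φ : Matrix (Fin 3) (Fin 3) ℝ,
      ![ξ₁, ξ₂, ξ₃] ⬝ᵥ (!![0, 0, 1; 0, -1, 0; 1, 0, f]).mulVec ![ξ₁, ξ₂, ξ₃] = 1 ∧
      φᵀ * !![0, 0, 1; 0, -1, 0; 1, 0, f] = -(!![0, 0, 1; 0, -1, 0; 1, 0, f] * φ) ∧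
      φ * φ = 1 - Matrix.vecMulVec ![ξ₁, ξ₂, ξ₃]
        ((!![0, 0, 1; 0, -1, 0; 1, 0, f]).mulVec ![ξ₁, ξ₂, ξ₃]) := by
  rintro ⟨φ, h1, h2, h3⟩
  have e00 := congrFun (congrFun h2 0) 0
  have e10 := congrFun (congrFun h2 1) 0
  have e01 := congrFun (congrFun h2 0) 1
  have e11 := congrFun (congrFun h2 1) 1
  have q20 := congrFun (congrFun h3 2) 0
  have q11 := congrFun (congrFun h3 1) 1
  rw [Matrix.sub_apply, Matrix.vecMulVec_apply] at q20 q11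
  simp [Matrix.mul_apply, Fin.sum_univ_three, Matrix.mulVec, Matrix.vecMul,
    Matrix.vecMulVec_apply, Matrix.one_apply, dotProduct,
    Matrix.transpose_apply, Matrix.neg_apply, Matrix.sub_apply]
    at e00 e10 e01 e11 q20 q11
  have h20 : φ 2 0 = 0 := by linarith
  have h11 : φ 1 1 = 0 := by linarith
  rw [h20, e10] at q20
  have h10 : φ 1 0 = 0 := mul_self_eq_zero.mp
    (le_antisymm (by nlinarith [mul_self_nonneg ξ₃]) (mul_self_nonneg _))
  rw [h10, h11, e10, h10] at q11
  nlinarith [mul_self_nonneg ξ₂]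
end

section
/- There do not exist smooth functions ξ₁, ξ₂, ξ₃, f : ℝ³ → ℝ satisfying ξ₂² + fξ₃² + 2ξ₁ξ₃ = 1 together with ∇_{∂x}ξ = φ∂x, ∇_{∂y}ξ = φ∂y and ∇_{∂z}ξ = φ∂z everywhere; explicitly, the system (ξ₁)_x + (1/2)ξ₃f_x = −ξ₂, (ξ₂)_x = ξ₃, (ξ₃)_x = 0, (ξ₁)_y + (1/2)ξ₃f_y = ξ₁ + fξ₃, (ξ₂)_y = 0, (ξ₃)_y = −ξ₃, (ξ₁)_z + (1/2)ξ₁f_x + (1/2)ξ₂f_y + (1/2)ξ₃(f f_x + f_z) = −fξ₂, (ξ₂)_z − (1/2)ξ₃f_y = −ξ₁, (ξ₃)_z − (1/2)ξ₃f_x = ξ₂ has no smooth solution on ℝ³ with ξ₂² + fξ₃² + 2ξ₁ξ₃ = 1. Since a 3-dimensional para-Sasakian (equivalently K-paracontact metric) structure satisfies ∇_Xξ = φX for all X, almost paracontact metric 3-dimensional Walker manifolds are never para-Sasakian (Theorem 4.1). -/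
open Real

/-- Points of the Walker manifold `M = ℝ³` with coordinates `(x,y,z)`. -/
abbrev Pt : Type := ℝ × ℝ × ℝ

/-- Vector fields on `ℝ³`, given by their components in the frame `∂x, ∂y, ∂z`. -/
abbrev VF : Type := Pt → Pt

/-- Partial derivative ∂/∂x. -/
noncomputable def pdx (F : Pt → ℝ) (p : Pt) : ℝ := fderiv ℝ F p ((1:ℝ), (0:ℝ), (0:ℝ))

/-- Partial derivative ∂/∂y. -/
noncomputable def pdy (F : Pt → ℝ) (p : Pt) : ℝ := fderiv ℝ F p ((0:ℝ), (1:ℝ), (0:ℝ))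

/-- Partial derivative ∂/∂z. -/
noncomputable def pdz (F : Pt → ℝ) (p : Pt) : ℝ := fderiv ℝ F p ((0:ℝ), (0:ℝ), (1:ℝ))

/-- Directional derivative of a scalar function along a vector field. -/
noncomputable def dd (X : VF) (F : Pt → ℝ) (p : Pt) : ℝ := fderiv ℝ F p (X p)

/-- Components of a tangent vector. -/
def c1 (v : Pt) : ℝ := v.1
def c2 (v : Pt) : ℝ := v.2.1
def c3 (v : Pt) : ℝ := v.2.2

/-- The coordinate vector fields `∂x, ∂y, ∂z`. -/
noncomputable def E : Fin 3 → VF :=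
  ![fun _ => ((1:ℝ), (0:ℝ), (0:ℝ)), fun _ => ((0:ℝ), (1:ℝ), (0:ℝ)),
    fun _ => ((0:ℝ), (0:ℝ), (1:ℝ))]

/-- The Walker metric with `ε = 1`: `g(∂x,∂z) = g(∂z,∂x) = 1`, `g(∂y,∂y) = 1`,
`g(∂z,∂z) = f`, all other components zero. -/
noncomputable def gm (f : Pt → ℝ) (X Y : VF) (p : Pt) : ℝ :=
  c1 (X p) * c3 (Y p) + c3 (X p) * c1 (Y p) + c2 (X p) * c2 (Y p)
    + f p * c3 (X p) * c3 (Y p)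

/-- The Levi-Civita connection of the Walker metric:
`∇_{∂x}∂z = ∇_{∂z}∂x = (1/2) f_x ∂x`, `∇_{∂y}∂z = ∇_{∂z}∂y = (1/2) f_y ∂x`,
`∇_{∂z}∂z = (1/2)(f f_x + f_z) ∂x - (1/2) f_y ∂y - (1/2) f_x ∂z`, all other covariant
derivatives of coordinate fields zero, extended by `C^∞`-linearity below and the
Leibniz rule above. -/
noncomputable def cov (f : Pt → ℝ) (X Y : VF) : VF := fun p =>
  ( dd X (fun q => c1 (Y q)) p
      + (1/2) * pdx f p * (c1 (X p) * c3 (Y p) + c3 (X p) * c1 (Y p))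
      + (1/2) * pdy f p * (c2 (X p) * c3 (Y p) + c3 (X p) * c2 (Y p))
      + (1/2) * (f p * pdx f p + pdz f p) * (c3 (X p) * c3 (Y p)),
    dd X (fun q => c2 (Y q)) p - (1/2) * pdy f p * (c3 (X p) * c3 (Y p)),
    dd X (fun q => c3 (Y q)) p - (1/2) * pdx f p * (c3 (X p) * c3 (Y p)) )

/-- Lie bracket of vector fields on `ℝ³`. -/
noncomputable def brk (X Y : VF) : VF := fun p =>
  ( dd X (fun q => c1 (Y q)) p - dd Y (fun q => c1 (X q)) p,
    dd X (fun q => c2 (Y q)) p - dd Y (fun q => c2 (X q)) p,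
    dd X (fun q => c3 (Y q)) p - dd Y (fun q => c3 (X q)) p )

/-- The `(1,1)`-tensor `φ` of the almost paracontact metric Walker structure:
`φ∂x = -ξ₂∂x + ξ₃∂y`, `φ∂y = (ξ₁ + fξ₃)∂x - ξ₃∂z`, `φ∂z = -fξ₂∂x - ξ₁∂y + ξ₂∂z`. -/
noncomputable def phiV (f ξ₁ ξ₂ ξ₃ : Pt → ℝ) (X : VF) : VF := fun p =>
  ( -ξ₂ p * c1 (X p) + (ξ₁ p + f p * ξ₃ p) * c2 (X p) - f p * ξ₂ p * c3 (X p),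
    ξ₃ p * c1 (X p) - ξ₁ p * c3 (X p),
    -ξ₃ p * c2 (X p) + ξ₂ p * c3 (X p) )

/-- The 1-form `η = ξ₃ dx + ξ₂ dy + (ξ₁ + fξ₃) dz`. -/
noncomputable def etaV (f ξ₁ ξ₂ ξ₃ : Pt → ℝ) (X : VF) (p : Pt) : ℝ :=
  ξ₃ p * c1 (X p) + ξ₂ p * c2 (X p) + (ξ₁ p + f p * ξ₃ p) * c3 (X p)

/-- The structure tensor `F(X,Y,Z) = g((∇_X φ)Y, Z)`, `(∇_X φ)Y = ∇_X(φY) - φ(∇_X Y)`. -/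
noncomputable def Ften (f ξ₁ ξ₂ ξ₃ : Pt → ℝ) (X Y Z : VF) (p : Pt) : ℝ :=
  gm f (fun q => cov f X (phiV f ξ₁ ξ₂ ξ₃ Y) q - phiV f ξ₁ ξ₂ ξ₃ (cov f X Y) q) Z p

/-- The fundamental 2-form `Φ(X,Y) = g(φX, Y)`. -/
noncomputable def Phi2 (f ξ₁ ξ₂ ξ₃ : Pt → ℝ) (X Y : VF) : Pt → ℝ :=
  gm f (phiV f ξ₁ ξ₂ ξ₃ X) Y

/-- `dη(∂i,∂j) = (1/2)(∂i(η(∂j)) - ∂j(η(∂i)))` on coordinate fields. -/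
noncomputable def deta (f ξ₁ ξ₂ ξ₃ : Pt → ℝ) (i j : Fin 3) (p : Pt) : ℝ :=
  (1/2) * (dd (E i) (etaV f ξ₁ ξ₂ ξ₃ (E j)) p - dd (E j) (etaV f ξ₁ ξ₂ ξ₃ (E i)) p)

/-- `dη(X,Y) = (1/2)(X(η(Y)) - Y(η(X)) - η([X,Y]))` on general vector fields. -/
noncomputable def detaB (f ξ₁ ξ₂ ξ₃ : Pt → ℝ) (X Y : VF) (p : Pt) : ℝ :=
  (1/2) * (dd X (etaV f ξ₁ ξ₂ ξ₃ Y) p - dd Y (etaV f ξ₁ ξ₂ ξ₃ X) p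
    - etaV f ξ₁ ξ₂ ξ₃ (brk X Y) p)

/-- The Nijenhuis tensor `N(X,Y) = φ²[X,Y] + [φX,φY] - φ[φX,Y] - φ[X,φY]`. -/
noncomputable def nij (f ξ₁ ξ₂ ξ₃ : Pt → ℝ) (X Y : VF) : VF := fun p =>
  phiV f ξ₁ ξ₂ ξ₃ (phiV f ξ₁ ξ₂ ξ₃ (brk X Y)) p
    + brk (phiV f ξ₁ ξ₂ ξ₃ X) (phiV f ξ₁ ξ₂ ξ₃ Y) p
    - phiV f ξ₁ ξ₂ ξ₃ (brk (phiV f ξ₁ ξ₂ ξ₃ X) Y) p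
    - phiV f ξ₁ ξ₂ ξ₃ (brk X (phiV f ξ₁ ξ₂ ξ₃ Y)) p

/-- The curvature tensor, with the paper's sign convention
`R(X,Y)Z = ∇_{[X,Y]}Z - ∇_X∇_Y Z + ∇_Y∇_X Z`. -/
noncomputable def Rop (f : Pt → ℝ) (X Y Z : VF) : VF := fun p =>
  cov f (brk X Y) Z p - cov f X (cov f Y Z) p + cov f Y (cov f X Z) p

/-- Second partial derivatives of `f`. -/
noncomputable def fxx (f : Pt → ℝ) : Pt → ℝ := pdx (pdx f)
noncomputable def fxy (f : Pt → ℝ) : Pt → ℝ := pdy (pdx f)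
noncomputable def fyy (f : Pt → ℝ) : Pt → ℝ := pdy (pdy f)

/-- The Ricci tensor of the Walker metric: `ρ(∂x,∂z) = ρ(∂z,∂x) = (1/2) f_xx`,
`ρ(∂y,∂z) = ρ(∂z,∂y) = (1/2) f_xy`, `ρ(∂z,∂z) = (1/2)(f f_xx - f_yy)`, all other
components zero, extended tensorially. -/
noncomputable def rhoT (f : Pt → ℝ) (X Y : VF) (p : Pt) : ℝ :=
  (1/2) * fxx f p * (c1 (X p) * c3 (Y p) + c3 (X p) * c1 (Y p))
    + (1/2) * fxy f p * (c2 (X p) * c3 (Y p) + c3 (X p) * c2 (Y p))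
    + (1/2) * (f p * fxx f p - fyy f p) * (c3 (X p) * c3 (Y p))

/-- The Ricci operator: `Q∂x = (1/2)f_xx ∂x`, `Q∂y = (1/2)f_xy ∂x`,
`Q∂z = -(1/2)f_yy ∂x + (1/2)f_xy ∂y + (1/2)f_xx ∂z`. -/
noncomputable def Qop (f : Pt → ℝ) (X : VF) : VF := fun p =>
  ( (1/2) * fxx f p * c1 (X p) + (1/2) * fxy f p * c2 (X p) - (1/2) * fyy f p * c3 (X p),
    (1/2) * fxy f p * c3 (X p),
    (1/2) * fxx f p * c3 (X p) )

/-- `dΦ(∂x,∂y,∂z) = ∂x(Φ(∂y,∂z)) - ∂y(Φ(∂x,∂z)) + ∂z(Φ(∂x,∂y))`. -/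
noncomputable def dPhi (f ξ₁ ξ₂ ξ₃ : Pt → ℝ) (p : Pt) : ℝ :=
  pdx (Phi2 f ξ₁ ξ₂ ξ₃ (E 1) (E 2)) p - pdy (Phi2 f ξ₁ ξ₂ ξ₃ (E 0) (E 2)) p
    + pdz (Phi2 f ξ₁ ξ₂ ξ₃ (E 0) (E 1)) p

/-- `(η∧Φ)(∂x,∂y,∂z) = η(∂x)Φ(∂y,∂z) - η(∂y)Φ(∂x,∂z) + η(∂z)Φ(∂x,∂y)`. -/
noncomputable def etaWedgePhi (f ξ₁ ξ₂ ξ₃ : Pt → ℝ) (p : Pt) : ℝ :=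
  etaV f ξ₁ ξ₂ ξ₃ (E 0) p * Phi2 f ξ₁ ξ₂ ξ₃ (E 1) (E 2) p
    - etaV f ξ₁ ξ₂ ξ₃ (E 1) p * Phi2 f ξ₁ ξ₂ ξ₃ (E 0) (E 2) p
    + etaV f ξ₁ ξ₂ ξ₃ (E 2) p * Phi2 f ξ₁ ξ₂ ξ₃ (E 0) (E 1) p

/-- The constant function `0`. -/
noncomputable def zeroF : Pt → ℝ := fun _ => 0
/-- The constant function `1`. -/
noncomputable def oneF : Pt → ℝ := fun _ => 1
/-- The constant function `-1`. -/
noncomputable def negOneF : Pt → ℝ := fun _ => -1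

/-- Theorem 4.1: almost paracontact metric 3-dimensional Walker manifolds are never
para-Sasakian; the system `∇_{∂x}ξ = φ∂x`, `∇_{∂y}ξ = φ∂y`, `∇_{∂z}ξ = φ∂z` has no
smooth solution. -/
theorem never_paraSasakian :
    ¬ ∃ ξ₁ ξ₂ ξ₃ f : Pt → ℝ,
      ContDiff ℝ (⊤ : ℕ∞) ξ₁ ∧ ContDiff ℝ (⊤ : ℕ∞) ξ₂ ∧ ContDiff ℝ (⊤ : ℕ∞) ξ₃ ∧
      ContDiff ℝ (⊤ : ℕ∞) f ∧
      (∀ p : Pt, ξ₂ p ^ 2 + f p * ξ₃ p ^ 2 + 2 * ξ₁ p * ξ₃ p = 1) ∧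
      (∀ p : Pt, pdx ξ₁ p + (1/2) * ξ₃ p * pdx f p = -ξ₂ p) ∧
      (∀ p : Pt, pdx ξ₂ p = ξ₃ p) ∧
      (∀ p : Pt, pdx ξ₃ p = 0) ∧
      (∀ p : Pt, pdy ξ₁ p + (1/2) * ξ₃ p * pdy f p = ξ₁ p + f p * ξ₃ p) ∧
      (∀ p : Pt, pdy ξ₂ p = 0) ∧
      (∀ p : Pt, pdy ξ₃ p = -ξ₃ p) ∧
      (∀ p : Pt, pdz ξ₁ p + (1/2) * ξ₁ p * pdx f p + (1/2) * ξ₂ p * pdy f p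
        + (1/2) * ξ₃ p * (f p * pdx f p + pdz f p) = -(f p * ξ₂ p)) ∧
      (∀ p : Pt, pdz ξ₂ p - (1/2) * ξ₃ p * pdy f p = -ξ₁ p) ∧
      (∀ p : Pt, pdz ξ₃ p - (1/2) * ξ₃ p * pdx f p = ξ₂ p) := by
  
  rintro ⟨ξ₁, ξ₂, ξ₃, f, hξ₁, hξ₂, hξ₃, hf, hcon, h1, h2, h3, h4, h5, h6, h7, h8, h9⟩
  set e₁ : Pt := ((1:ℝ), (0:ℝ), (0:ℝ))
  set e₂ : Pt := ((0:ℝ), (1:ℝ), (0:ℝ))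
  -- second derivative of ξ₂
  have hd : ∀ q : Pt, HasFDerivAt ξ₂ (fderiv ℝ ξ₂ q) q := fun q =>
    (hξ₂.differentiable (by simp) q).hasFDerivAt
  have hfd : Differentiable ℝ (fderiv ℝ ξ₂) :=
    (hξ₂.fderiv_right (m := (⊤:ℕ∞)) (by exact_mod_cast le_top)).differentiable (by simp)
  have hξ₃zero : ∀ p : Pt, ξ₃ p = 0 := by
    intro p
    have hd2 : HasFDerivAt (fderiv ℝ ξ₂) (fderiv ℝ (fderiv ℝ ξ₂) p) p :=
      (hfd p).hasFDerivAt
    have hsymm := second_derivative_symmetric hd hd2 e₁ e₂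
    -- fderiv of (fun q => fderiv ℝ ξ₂ q v)
    have key : ∀ v w : Pt,
        fderiv ℝ (fun q => fderiv ℝ ξ₂ q v) p w = fderiv ℝ (fderiv ℝ ξ₂) p w v := by
      intro v w
      have h : HasFDerivAt (fun q => fderiv ℝ ξ₂ q v)
          ((ContinuousLinearMap.apply ℝ ℝ v).comp (fderiv ℝ (fderiv ℝ ξ₂) p)) p :=
        ((ContinuousLinearMap.apply ℝ ℝ v).hasFDerivAt.comp p hd2)
      rw [h.fderiv]
      rfl
    -- pdy (pdx ξ₂) = pdy ξ₃ = -ξ₃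
    have hA : fderiv ℝ (fderiv ℝ ξ₂) p e₂ e₁ = -ξ₃ p := by
      rw [← key e₁ e₂]
      have hfun : (fun q => fderiv ℝ ξ₂ q e₁) = ξ₃ := funext fun q => h2 q
      rw [hfun]
      exact h6 p
    -- pdx (pdy ξ₂) = 0
    have hB : fderiv ℝ (fderiv ℝ ξ₂) p e₁ e₂ = 0 := by
      rw [← key e₂ e₁]
      have hfun : (fun q => fderiv ℝ ξ₂ q e₂) = (fun _ => (0:ℝ)) := funext fun q => h5 q
      rw [hfun, fderiv_fun_const]
      rfl
    rw [hA, hB] at hsymm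
    linarith
  -- then ξ₃ = 0, so pdz ξ₃ = 0 and pdx f·ξ₃ = 0, hence ξ₂ = 0
  have hξ₂zero : ∀ p : Pt, ξ₂ p = 0 := by
    intro p
    have h9p := h9 p
    have hz : pdz ξ₃ p = 0 := by
      have : ξ₃ = fun _ => (0:ℝ) := funext hξ₃zero
      rw [pdz, this, fderiv_fun_const]
      rfl
    rw [hz, hξ₃zero p] at h9p
    linarith
  have := hcon 0
  rw [hξ₂zero 0, hξ₃zero 0] at this
  norm_num at this
end

section
/- Consider an almost paracontact metric Walker structure on ℝ³ in which either (a) ξ₃ ≡ 0 (so that the constraint forces ξ₂² ≡ 1), or (b) ξ₁ ≡ 0 and ξ₂ ≡ 0 (so that the constraint forces f ξ₃² ≡ 1). Then the paracontact condition dη(∂i,∂j) = Φ(∂i,∂j) for all coordinate fields cannot hold at every point of ℝ³; that is, such structures are never paracontact metric (Corollary 4.1). -/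
open Real

private lemma hasDerivAt_sliceX (F : Pt → ℝ) (hF : Differentiable ℝ F) (y z t : ℝ) :
    HasDerivAt (fun s => F (s, y, z)) (fderiv ℝ F (t, y, z) ((1:ℝ),(0:ℝ),(0:ℝ))) t := by
  have hline : HasDerivAt (fun s : ℝ => ((s, y, z) : Pt)) ((1:ℝ),(0:ℝ),(0:ℝ)) t :=
    (hasDerivAt_id t).prodMk (hasDerivAt_const t ((y, z) : ℝ × ℝ))
  exact (hF _).hasFDerivAt.comp_hasDerivAt t hline

private lemma hasDerivAt_sliceY (F : Pt → ℝ) (hF : Differentiable ℝ F) (x z t : ℝ) :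
    HasDerivAt (fun s => F (x, s, z)) (fderiv ℝ F (x, t, z) ((0:ℝ),(1:ℝ),(0:ℝ))) t := by
  have hline : HasDerivAt (fun s : ℝ => ((x, s, z) : Pt)) ((0:ℝ),(1:ℝ),(0:ℝ)) t :=
    (hasDerivAt_const t x).prodMk ((hasDerivAt_id t).prodMk (hasDerivAt_const t z))
  exact (hF _).hasFDerivAt.comp_hasDerivAt t hline

/-- Corollary 4.1: almost paracontact metric 3-dimensional Walker manifolds for which
`ξ₃ ≡ 0` or `ξ₁ ≡ ξ₂ ≡ 0` are never paracontact metric. -/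
theorem never_paracontact_metric (f ξ₁ ξ₂ ξ₃ : Pt → ℝ)
    (hf : ContDiff ℝ (⊤ : ℕ∞) f) (h1 : ContDiff ℝ (⊤ : ℕ∞) ξ₁)
    (h2 : ContDiff ℝ (⊤ : ℕ∞) ξ₂) (h3 : ContDiff ℝ (⊤ : ℕ∞) ξ₃)
    (hconstr : ∀ p : Pt, ξ₂ p ^ 2 + f p * ξ₃ p ^ 2 + 2 * ξ₁ p * ξ₃ p = 1)
    (hcase : (∀ p : Pt, ξ₃ p = 0) ∨ ((∀ p : Pt, ξ₁ p = 0) ∧ (∀ p : Pt, ξ₂ p = 0))) :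
    ¬ ∀ (i j : Fin 3) (p : Pt),
        deta f ξ₁ ξ₂ ξ₃ i j p = Phi2 f ξ₁ ξ₂ ξ₃ (E i) (E j) p := by
  intro hpc
  have hdf : Differentiable ℝ f := hf.differentiable (by simp)
  have hd1 : Differentiable ℝ ξ₁ := h1.differentiable (by simp)
  have hd2 : Differentiable ℝ ξ₂ := h2.differentiable (by simp)
  have hd3 : Differentiable ℝ ξ₃ := h3.differentiable (by simp)
  rcases hcase with hz | ⟨ha, hb⟩
  · -- Case (a): ξ₃ ≡ 0, so ξ₂² ≡ 1
    have hsq : ∀ p : Pt, ξ₂ p * ξ₂ p = 1 := by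
      intro p; have h := hconstr p; rw [hz p] at h; nlinarith
    have hne : ∀ p : Pt, ξ₂ p ≠ 0 := by
      intro p hp; have := hsq p; rw [hp] at this; norm_num at this
    have hfd2 : ∀ p : Pt, fderiv ℝ ξ₂ p = 0 := by
      intro p
      have hfun : (fun q : Pt => ξ₂ q * ξ₂ q) = fun _ => (1:ℝ) := funext fun q => hsq q
      have h0 : fderiv ℝ (fun q : Pt => ξ₂ q * ξ₂ q) p = 0 := by
        rw [hfun]; exact fderiv_const_apply 1
      rw [fderiv_fun_mul (hd2 p) (hd2 p)] at h0
      have h0' : (2 * ξ₂ p) • fderiv ℝ ξ₂ p = 0 := by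
        rw [two_mul, add_smul]; exact h0
      rcases smul_eq_zero.mp h0' with h | h
      · exact absurd h (by simpa using hne p)
      · exact h
    have e0 : etaV f ξ₁ ξ₂ ξ₃ (E 0) = fun _ => (0:ℝ) := by
      funext q; simp [etaV, c1, c2, c3, show E 0 = (fun _ => ((1:ℝ),0,0)) from rfl, hz q]
    have e2 : etaV f ξ₁ ξ₂ ξ₃ (E 2) = ξ₁ := by
      funext q; simp [etaV, c1, c2, c3, show E 2 = (fun _ => ((0:ℝ),0,1)) from rfl, hz q]
    have hA : ∀ p : Pt, fderiv ℝ ξ₁ p ((1:ℝ),(0:ℝ),(0:ℝ)) = -(2 * ξ₂ p) := by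
      intro p
      have h := hpc 0 2 p
      rw [deta, dd, dd, e0, e2] at h
      simp [Phi2, gm, phiV, c1, c2, c3, show E 0 = (fun _ => ((1:ℝ),0,0)) from rfl,
        show E 2 = (fun _ => ((0:ℝ),0,1)) from rfl, hz p] at h
      simp only [Prod.mk_zero_zero] at h ⊢
      linarith
    have hB : ∀ p : Pt, fderiv ℝ ξ₁ p ((0:ℝ),(1:ℝ),(0:ℝ)) = 2 * ξ₁ p := by
      intro p
      have h := hpc 1 2 p
      have e1 : etaV f ξ₁ ξ₂ ξ₃ (E 1) = ξ₂ := by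
        funext q; simp [etaV, c1, c2, c3, show E 1 = (fun _ => ((0:ℝ),1,0)) from rfl]
      rw [deta, dd, dd, e1, e2] at h
      rw [show (E 2) p = ((0:ℝ),0,1) from rfl, show (E 1) p = ((0:ℝ),1,0) from rfl,
        hfd2 p] at h
      simp [Phi2, gm, phiV, c1, c2, c3, show E 1 = (fun _ => ((0:ℝ),1,0)) from rfl,
        show E 2 = (fun _ => ((0:ℝ),0,1)) from rfl, hz p] at h
      linarith
    have hcc : ∀ p : Pt, ξ₂ p = ξ₂ (0,0,0) := fun p =>
      is_const_of_fderiv_eq_zero hd2 hfd2 p (0,0,0)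
    set c := ξ₂ ((0:ℝ),(0:ℝ),(0:ℝ)) with hcdef
    have hx : ∀ x y z : ℝ, ξ₁ (x, y, z) = ξ₁ (0, y, z) - 2 * c * x := by
      intro x y z
      have hhd : ∀ t : ℝ, HasDerivAt (fun s : ℝ => ξ₁ (s, y, z) + 2 * c * s) 0 t := by
        intro t
        have h := (hasDerivAt_sliceX ξ₁ hd1 y z t).add
          ((hasDerivAt_id t).const_mul (2 * c))
        have heq : fderiv ℝ ξ₁ (t, y, z) ((1:ℝ),(0:ℝ),(0:ℝ)) + 2 * c * 1 = 0 := by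
          rw [hA (t, y, z), hcc (t, y, z)]; ring
        rw [heq] at h
        exact h
      have hconst := is_const_of_deriv_eq_zero (fun t => (hhd t).differentiableAt)
        (fun t => (hhd t).deriv) x 0
      simp only [mul_zero, add_zero] at hconst
      linarith
    have keyfun : (fun s : ℝ => ξ₁ (1, s, 0)) = fun s : ℝ => ξ₁ (0, s, 0) - 2 * c := by
      funext s; rw [hx 1 s 0]; ring
    have d1 : HasDerivAt (fun s : ℝ => ξ₁ (1, s, 0))
        (fderiv ℝ ξ₁ ((1:ℝ),(0:ℝ),(0:ℝ)) ((0:ℝ),(1:ℝ),(0:ℝ))) 0 :=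
      hasDerivAt_sliceY ξ₁ hd1 1 0 0
    have d0 : HasDerivAt (fun s : ℝ => ξ₁ (0, s, 0) - 2 * c)
        (fderiv ℝ ξ₁ ((0:ℝ),(0:ℝ),(0:ℝ)) ((0:ℝ),(1:ℝ),(0:ℝ))) 0 :=
      (hasDerivAt_sliceY ξ₁ hd1 0 0 0).sub_const _
    rw [keyfun] at d1
    have huniq := d1.unique d0
    rw [hB ((1:ℝ),(0:ℝ),(0:ℝ)), hB ((0:ℝ),(0:ℝ),(0:ℝ))] at huniq
    have h100 := hx 1 0 0
    have hc2 := hsq ((0:ℝ),(0:ℝ),(0:ℝ))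
    rw [← hcdef] at hc2
    nlinarith
  · -- Case (b): ξ₁ ≡ 0, ξ₂ ≡ 0, so f ξ₃² ≡ 1
    set p₀ : Pt := ((0:ℝ),(0:ℝ),(0:ℝ))
    have e0 : etaV f ξ₁ ξ₂ ξ₃ (E 0) = ξ₃ := by
      funext q; simp [etaV, c1, c2, c3, show E 0 = (fun _ => ((1:ℝ),0,0)) from rfl]
    have e1 : etaV f ξ₁ ξ₂ ξ₃ (E 1) = fun _ => (0:ℝ) := by
      funext q; simp [etaV, c1, c2, c3, show E 1 = (fun _ => ((0:ℝ),1,0)) from rfl, hb q]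
    have e2 : etaV f ξ₁ ξ₂ ξ₃ (E 2) = fun q => f q * ξ₃ q := by
      funext q; simp [etaV, c1, c2, c3, show E 2 = (fun _ => ((0:ℝ),0,1)) from rfl, ha q]
    -- equation from (∂x, ∂y)
    have hA : fderiv ℝ ξ₃ p₀ ((0:ℝ),(1:ℝ),(0:ℝ)) = -(2 * ξ₃ p₀) := by
      have h := hpc 0 1 p₀
      rw [deta, dd, dd, e0, e1] at h
      simp [Phi2, gm, phiV, c1, c2, c3, show E 0 = (fun _ => ((1:ℝ),0,0)) from rfl,
        show E 1 = (fun _ => ((0:ℝ),1,0)) from rfl, ha p₀, hb p₀] at h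
      linarith
    -- equation from (∂y, ∂z)
    have hB : f p₀ * fderiv ℝ ξ₃ p₀ ((0:ℝ),(1:ℝ),(0:ℝ))
        + ξ₃ p₀ * fderiv ℝ f p₀ ((0:ℝ),(1:ℝ),(0:ℝ)) = 0 := by
      have h := hpc 1 2 p₀
      rw [deta, dd, dd, e1, e2] at h
      rw [fderiv_fun_mul (hdf p₀) (hd3 p₀)] at h
      simp [Phi2, gm, phiV, c1, c2, c3, show E 1 = (fun _ => ((0:ℝ),1,0)) from rfl,
        show E 2 = (fun _ => ((0:ℝ),0,1)) from rfl, ha p₀, hb p₀] at h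
      linarith
    -- derivative of the constraint f ξ₃² = 1
    have hcon : ∀ q : Pt, f q * (ξ₃ q * ξ₃ q) = 1 := by
      intro q; have h := hconstr q; rw [ha q, hb q] at h; nlinarith
    have hC : fderiv ℝ f p₀ ((0:ℝ),(1:ℝ),(0:ℝ)) * (ξ₃ p₀ * ξ₃ p₀)
        + f p₀ * (2 * ξ₃ p₀ * fderiv ℝ ξ₃ p₀ ((0:ℝ),(1:ℝ),(0:ℝ))) = 0 := by
      have hfun : (fun q : Pt => f q * (ξ₃ q * ξ₃ q)) = fun _ => (1:ℝ) :=
        funext fun q => hcon q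
      have h0 : fderiv ℝ (fun q : Pt => f q * (ξ₃ q * ξ₃ q)) p₀ = 0 := by
        rw [hfun]; exact fderiv_const_apply 1
      rw [fderiv_fun_mul (d := fun q => ξ₃ q * ξ₃ q) (hdf p₀) ((hd3 p₀).mul (hd3 p₀)), fderiv_fun_mul (hd3 p₀) (hd3 p₀)]
        at h0
      have := congrArg (fun L : Pt →L[ℝ] ℝ => L ((0:ℝ),(1:ℝ),(0:ℝ))) h0
      simp only [ContinuousLinearMap.add_apply, ContinuousLinearMap.coe_smul',
        Pi.smul_apply, smul_eq_mul, ContinuousLinearMap.zero_apply] at this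
      nlinarith [this]
    have h1p := hcon p₀
    have k1 : ξ₃ p₀ * (f p₀ * fderiv ℝ ξ₃ p₀ ((0:ℝ),(1:ℝ),(0:ℝ))
        + ξ₃ p₀ * fderiv ℝ f p₀ ((0:ℝ),(1:ℝ),(0:ℝ))) = 0 := by rw [hB, mul_zero]
    have k2 : f p₀ * (ξ₃ p₀ * fderiv ℝ ξ₃ p₀ ((0:ℝ),(1:ℝ),(0:ℝ))) = -2 := by
      rw [hA]; linear_combination (-2 : ℝ) * h1p
    nlinarith [k1, k2, hC]
end

section
/- Consider an almost paracontact metric Walker structure on ℝ³ with ξ₂ ≡ 0, so the constraint reads f ξ₃² + 2ξ₁ξ₃ = 1 (in particular ξ₃ vanishes nowhere); assume moreover ξ₃ > 0 everywhere (as is implicit in the paper's formula). Then the structure is paracontact metric, i.e. dη(∂i,∂j) = Φ(∂i,∂j) holds for all coordinate fields at every point, if and only if there exist smooth functions ψ, m : ℝ → ℝ such that ξ₃(x,y,z) = exp(−2y + ψ(z)) and f(x,y,z) = 2ψ′(z)·x + m(z) for all (x,y,z) ∈ ℝ³ (Theorem 4.2). -/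
open Real

-- η applied to coordinate fields
lemma eta0 (f ξ₁ ξ₃ : Pt → ℝ) : etaV f ξ₁ zeroF ξ₃ (E 0) = ξ₃ := by
  funext p; simp [etaV, E, c1, c2, c3, zeroF]

lemma eta1 (f ξ₁ ξ₃ : Pt → ℝ) : etaV f ξ₁ zeroF ξ₃ (E 1) = fun _ => (0:ℝ) := by
  funext p; simp [etaV, E, c1, c2, c3, zeroF]

lemma eta2 (f ξ₁ ξ₃ : Pt → ℝ) :
    etaV f ξ₁ zeroF ξ₃ (E 2) = fun p => ξ₁ p + f p * ξ₃ p := by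
  funext p; simp [etaV, E, c1, c2, c3, zeroF]


section Comp
variable (f ξ₁ ξ₃ : Pt → ℝ) (p : Pt)

lemma deta01 : deta f ξ₁ zeroF ξ₃ 0 1 p = -(1/2) * pdy ξ₃ p := by
  simp only [deta, dd, eta0 f ξ₁ ξ₃, eta1 f ξ₁ ξ₃]
  simp [E, pdy]

lemma deta02 : deta f ξ₁ zeroF ξ₃ 0 2 p
    = (1/2) * (pdx (fun q => ξ₁ q + f q * ξ₃ q) p - pdz ξ₃ p) := by
  simp only [deta, dd, eta0 f ξ₁ ξ₃, eta2 f ξ₁ ξ₃]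
  simp [E, pdx, pdz]

lemma deta12 : deta f ξ₁ zeroF ξ₃ 1 2 p
    = (1/2) * pdy (fun q => ξ₁ q + f q * ξ₃ q) p := by
  simp only [deta, dd, eta1 f ξ₁ ξ₃, eta2 f ξ₁ ξ₃]
  simp [E, pdy]

lemma deta_skew (i j : Fin 3) : deta f ξ₁ zeroF ξ₃ j i p = -deta f ξ₁ zeroF ξ₃ i j p := by
  simp [deta]; ring

lemma Phi00 : Phi2 f ξ₁ zeroF ξ₃ (E 0) (E 0) p = 0 := by
  simp [Phi2, gm, phiV, E, zeroF, c1, c2, c3]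
lemma Phi11 : Phi2 f ξ₁ zeroF ξ₃ (E 1) (E 1) p = 0 := by
  simp [Phi2, gm, phiV, E, zeroF, c1, c2, c3]
lemma Phi22 : Phi2 f ξ₁ zeroF ξ₃ (E 2) (E 2) p = 0 := by
  simp [Phi2, gm, phiV, E, zeroF, c1, c2, c3]
lemma Phi01 : Phi2 f ξ₁ zeroF ξ₃ (E 0) (E 1) p = ξ₃ p := by
  simp [Phi2, gm, phiV, E, zeroF, c1, c2, c3]
lemma Phi10 : Phi2 f ξ₁ zeroF ξ₃ (E 1) (E 0) p = -ξ₃ p := by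
  simp [Phi2, gm, phiV, E, zeroF, c1, c2, c3]
lemma Phi02 : Phi2 f ξ₁ zeroF ξ₃ (E 0) (E 2) p = 0 := by
  simp [Phi2, gm, phiV, E, zeroF, c1, c2, c3]
lemma Phi20 : Phi2 f ξ₁ zeroF ξ₃ (E 2) (E 0) p = 0 := by
  simp [Phi2, gm, phiV, E, zeroF, c1, c2, c3]
lemma Phi12 : Phi2 f ξ₁ zeroF ξ₃ (E 1) (E 2) p = ξ₁ p := by
  simp [Phi2, gm, phiV, E, zeroF, c1, c2, c3]
lemma Phi21 : Phi2 f ξ₁ zeroF ξ₃ (E 2) (E 1) p = -ξ₁ p := by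
  simp [Phi2, gm, phiV, E, zeroF, c1, c2, c3]

end Comp

lemma key (f ξ₁ ξ₃ : Pt → ℝ) :
    (∀ (i j : Fin 3) (p : Pt),
        deta f ξ₁ zeroF ξ₃ i j p = Phi2 f ξ₁ zeroF ξ₃ (E i) (E j) p) ↔
    (∀ p : Pt, pdy ξ₃ p = -2 * ξ₃ p ∧
      pdx (fun q => ξ₁ q + f q * ξ₃ q) p = pdz ξ₃ p ∧
      pdy (fun q => ξ₁ q + f q * ξ₃ q) p = 2 * ξ₁ p) := by
  constructor
  · intro H p
    have h01 := H 0 1 p; rw [deta01, Phi01] at h01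
    have h02 := H 0 2 p; rw [deta02, Phi02] at h02
    have h12 := H 1 2 p; rw [deta12, Phi12] at h12
    exact ⟨by linarith, by linarith, by linarith⟩
  · intro H i j p
    obtain ⟨hA, hB, hC⟩ := H p
    have skew := deta_skew f ξ₁ ξ₃ p
    fin_cases i <;> fin_cases j
    · show deta f ξ₁ zeroF ξ₃ 0 0 p = Phi2 f ξ₁ zeroF ξ₃ (E 0) (E 0) p
      rw [Phi00]; linarith [skew 0 0]
    · show deta f ξ₁ zeroF ξ₃ 0 1 p = Phi2 f ξ₁ zeroF ξ₃ (E 0) (E 1) p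
      rw [deta01, Phi01]; linarith
    · show deta f ξ₁ zeroF ξ₃ 0 2 p = Phi2 f ξ₁ zeroF ξ₃ (E 0) (E 2) p
      rw [deta02, Phi02]; linarith
    · show deta f ξ₁ zeroF ξ₃ 1 0 p = Phi2 f ξ₁ zeroF ξ₃ (E 1) (E 0) p
      rw [skew 0 1, deta01, Phi10]; linarith
    · show deta f ξ₁ zeroF ξ₃ 1 1 p = Phi2 f ξ₁ zeroF ξ₃ (E 1) (E 1) p
      rw [Phi11]; linarith [skew 1 1]
    · show deta f ξ₁ zeroF ξ₃ 1 2 p = Phi2 f ξ₁ zeroF ξ₃ (E 1) (E 2) p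
      rw [deta12, Phi12]; linarith
    · show deta f ξ₁ zeroF ξ₃ 2 0 p = Phi2 f ξ₁ zeroF ξ₃ (E 2) (E 0) p
      rw [skew 0 2, deta02, Phi20]; linarith
    · show deta f ξ₁ zeroF ξ₃ 2 1 p = Phi2 f ξ₁ zeroF ξ₃ (E 2) (E 1) p
      rw [skew 1 2, deta12, Phi21]; linarith
    · show deta f ξ₁ zeroF ξ₃ 2 2 p = Phi2 f ξ₁ zeroF ξ₃ (E 2) (E 2) p
      rw [Phi22]; linarith [skew 2 2]

-- toolkit
lemma sliceX (F : Pt → ℝ) {x y z : ℝ} (hF : DifferentiableAt ℝ F (x, y, z)) :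
    HasDerivAt (fun t => F (t, y, z)) (pdx F (x, y, z)) x := by
  have hl : HasDerivAt (fun t : ℝ => ((t, y, z) : Pt)) ((1:ℝ),(0:ℝ),(0:ℝ)) x :=
    HasDerivAt.prodMk (hasDerivAt_id x) (HasDerivAt.prodMk (hasDerivAt_const x y) (hasDerivAt_const x z))
  exact hF.hasFDerivAt.comp_hasDerivAt x hl

lemma sliceY (F : Pt → ℝ) {x y z : ℝ} (hF : DifferentiableAt ℝ F (x, y, z)) :
    HasDerivAt (fun t => F (x, t, z)) (pdy F (x, y, z)) y := by
  have hl : HasDerivAt (fun t : ℝ => ((x, t, z) : Pt)) ((0:ℝ),(1:ℝ),(0:ℝ)) y :=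
    HasDerivAt.prodMk (hasDerivAt_const y x) (HasDerivAt.prodMk (hasDerivAt_id y) (hasDerivAt_const y z))
  exact hF.hasFDerivAt.comp_hasDerivAt y hl

lemma sliceZ (F : Pt → ℝ) {x y z : ℝ} (hF : DifferentiableAt ℝ F (x, y, z)) :
    HasDerivAt (fun t => F (x, y, t)) (pdz F (x, y, z)) z := by
  have hl : HasDerivAt (fun t : ℝ => ((x, y, t) : Pt)) ((0:ℝ),(0:ℝ),(1:ℝ)) z :=
    HasDerivAt.prodMk (hasDerivAt_const z x) (HasDerivAt.prodMk (hasDerivAt_const z y) (hasDerivAt_id z))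
  exact hF.hasFDerivAt.comp_hasDerivAt z hl

lemma fd_mul (F G : Pt → ℝ) (p v : Pt) (hF : DifferentiableAt ℝ F p)
    (hG : DifferentiableAt ℝ G p) :
    fderiv ℝ (fun q => F q * G q) p v
      = fderiv ℝ F p v * G p + F p * fderiv ℝ G p v := by
  rw [fderiv_fun_mul hF hG]
  simp [ContinuousLinearMap.add_apply, ContinuousLinearMap.smul_apply, smul_eq_mul]
  ring

lemma fd_add (F G : Pt → ℝ) (p v : Pt) (hF : DifferentiableAt ℝ F p)
    (hG : DifferentiableAt ℝ G p) :
    fderiv ℝ (fun q => F q + G q) p v = fderiv ℝ F p v + fderiv ℝ G p v := by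
  rw [fderiv_fun_add hF hG]; simp

lemma constr_d (f ξ₁ ξ₃ : Pt → ℝ)
    (hf : Differentiable ℝ f) (h1 : Differentiable ℝ ξ₁) (h3 : Differentiable ℝ ξ₃)
    (hconstr : ∀ p : Pt, f p * ξ₃ p ^ 2 + 2 * ξ₁ p * ξ₃ p = 1) (p v : Pt) :
    fderiv ℝ f p v * (ξ₃ p * ξ₃ p) + f p * (2 * ξ₃ p * fderiv ℝ ξ₃ p v)
      + 2 * fderiv ℝ ξ₁ p v * ξ₃ p + 2 * ξ₁ p * fderiv ℝ ξ₃ p v = 0 := by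
  have hfun : (fun q => f q * (ξ₃ q * ξ₃ q) + 2 * ξ₁ q * ξ₃ q) = fun _ => (1:ℝ) :=
    funext fun q => by rw [← hconstr q]; ring
  have H : HasFDerivAt (fun q => f q * (ξ₃ q * ξ₃ q) + 2 * ξ₁ q * ξ₃ q)
      ((f p • (ξ₃ p • fderiv ℝ ξ₃ p + ξ₃ p • fderiv ℝ ξ₃ p)
          + (ξ₃ p * ξ₃ p) • fderiv ℝ f p)
        + ((2 * ξ₁ p) • fderiv ℝ ξ₃ p + ξ₃ p • ((2:ℝ) • fderiv ℝ ξ₁ p))) p := by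
    exact ((hf p).hasFDerivAt.mul ((h3 p).hasFDerivAt.mul (h3 p).hasFDerivAt)).add
      ((((h1 p).hasFDerivAt).const_mul 2).mul (h3 p).hasFDerivAt)
  have h0 : fderiv ℝ (fun q => f q * (ξ₃ q * ξ₃ q) + 2 * ξ₁ q * ξ₃ q) p = 0 := by
    rw [hfun]; exact fderiv_const_apply 1
  have := H.fderiv.symm.trans h0
  have happ := congrArg (fun (L : Pt →L[ℝ] ℝ) => L v) this
  simp only [ContinuousLinearMap.add_apply, ContinuousLinearMap.smul_apply,
    ContinuousLinearMap.zero_apply, smul_eq_mul] at happ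
  linear_combination happ

lemma forward (f ξ₁ ξ₃ : Pt → ℝ)
    (hf : ContDiff ℝ (⊤ : ℕ∞) f) (h1 : ContDiff ℝ (⊤ : ℕ∞) ξ₁)
    (h3 : ContDiff ℝ (⊤ : ℕ∞) ξ₃)
    (hconstr : ∀ p : Pt, f p * ξ₃ p ^ 2 + 2 * ξ₁ p * ξ₃ p = 1)
    (hpos : ∀ p : Pt, 0 < ξ₃ p)
    (cond : ∀ p : Pt, pdy ξ₃ p = -2 * ξ₃ p ∧
      pdx (fun q => ξ₁ q + f q * ξ₃ q) p = pdz ξ₃ p ∧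
      pdy (fun q => ξ₁ q + f q * ξ₃ q) p = 2 * ξ₁ p) :
    ∃ ψ m : ℝ → ℝ, ContDiff ℝ (⊤ : ℕ∞) ψ ∧ ContDiff ℝ (⊤ : ℕ∞) m ∧
      ∀ x y z : ℝ, ξ₃ (x, y, z) = Real.exp (-2 * y + ψ z) ∧
        f (x, y, z) = 2 * deriv ψ z * x + m z := by
  have hfd : Differentiable ℝ f := hf.differentiable (by simp)
  have h1d : Differentiable ℝ ξ₁ := h1.differentiable (by simp)
  have h3d : Differentiable ℝ ξ₃ := h3.differentiable (by simp)
  -- expansion of the A-conditions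
  have expand : ∀ (p v : Pt), fderiv ℝ (fun q => ξ₁ q + f q * ξ₃ q) p v
      = fderiv ℝ ξ₁ p v + (fderiv ℝ f p v * ξ₃ p + f p * fderiv ℝ ξ₃ p v) := by
    intro p v
    rw [fd_add _ (fun q => f q * ξ₃ q) _ _ (h1d p) ((hfd p).mul (h3d p)), fd_mul _ _ _ _ (hfd p) (h3d p)]
  -- f_y = 0
  have hfy : ∀ p : Pt, fderiv ℝ f p ((0:ℝ),(1:ℝ),(0:ℝ)) = 0 := by
    intro p
    obtain ⟨C1, C2, C3⟩ := cond p
    have e1 := constr_d f ξ₁ ξ₃ hfd h1d h3d hconstr p ((0:ℝ),(1:ℝ),(0:ℝ))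
    have e2 : fderiv ℝ ξ₁ p ((0:ℝ),(1:ℝ),(0:ℝ))
        + (fderiv ℝ f p ((0:ℝ),(1:ℝ),(0:ℝ)) * ξ₃ p
          + f p * fderiv ℝ ξ₃ p ((0:ℝ),(1:ℝ),(0:ℝ))) = 2 * ξ₁ p := by
      rw [← expand p]; exact C3
    have hC1 : fderiv ℝ ξ₃ p ((0:ℝ),(1:ℝ),(0:ℝ)) = -2 * ξ₃ p := C1
    rw [hC1] at e1 e2
    have hz : fderiv ℝ f p ((0:ℝ),(1:ℝ),(0:ℝ)) * (ξ₃ p * ξ₃ p) = 0 := by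
      linear_combination 2 * ξ₃ p * e2 - e1
    have h3ne : ξ₃ p * ξ₃ p ≠ 0 := ne_of_gt (mul_pos (hpos p) (hpos p))
    exact (mul_eq_zero.mp hz).resolve_right h3ne
  -- f independent of y
  have hfconst : ∀ x y z : ℝ, f (x, y, z) = f (x, 0, z) := by
    intro x y z
    refine is_const_of_deriv_eq_zero (f := fun t => f (x, t, z))
      (fun t => (sliceY f (hfd (x, t, z))).differentiableAt) (fun t => ?_) y 0
    have h := sliceY f (hfd (x, t, z))
    rw [show pdy f (x, t, z) = 0 from hfy _] at h
    exact h.deriv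
  -- exponential form in y
  have hexp : ∀ x y z : ℝ, ξ₃ (x, y, z) = ξ₃ (x, 0, z) * Real.exp (-2 * y) := by
    intro x y z
    have hg : ∀ t : ℝ, HasDerivAt (fun t => ξ₃ (x, t, z) * Real.exp (2 * t)) 0 t := by
      intro t
      have h2' : HasDerivAt (fun t : ℝ => Real.exp (2 * t)) (Real.exp (2 * t) * 2) t := by
        simpa using ((hasDerivAt_id t).const_mul 2).exp
      have h := (sliceY ξ₃ (h3d (x, t, z))).mul h2'
      have hval : pdy ξ₃ (x, t, z) * Real.exp (2 * t)
          + ξ₃ (x, t, z) * (Real.exp (2 * t) * 2) = 0 := by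
        rw [(cond (x, t, z)).1]; ring
      rw [hval] at h
      exact h
    have hconst := is_const_of_deriv_eq_zero
      (fun t => (hg t).differentiableAt) (fun t => (hg t).deriv) y 0
    simp only [mul_zero, Real.exp_zero, mul_one] at hconst
    rw [← hconst, mul_assoc, ← Real.exp_add]
    norm_num
  -- derivative transfers
  have hD3x : ∀ x y z : ℝ, pdx ξ₃ (x, y, z) = pdx ξ₃ (x, 0, z) * Real.exp (-2 * y) := by
    intro x y z
    have h2 : HasDerivAt (fun t => ξ₃ (t, 0, z) * Real.exp (-2 * y))
        (pdx ξ₃ (x, 0, z) * Real.exp (-2 * y)) x := (sliceX ξ₃ (h3d (x, 0, z))).mul_const _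
    have heq : (fun t => ξ₃ (t, y, z)) = fun t => ξ₃ (t, 0, z) * Real.exp (-2 * y) :=
      funext fun t => hexp t y z
    exact (sliceX ξ₃ (h3d (x, y, z))).unique (heq ▸ h2)
  have hD3z : ∀ x y z : ℝ, pdz ξ₃ (x, y, z) = pdz ξ₃ (x, 0, z) * Real.exp (-2 * y) := by
    intro x y z
    have h2 : HasDerivAt (fun t => ξ₃ (x, 0, t) * Real.exp (-2 * y))
        (pdz ξ₃ (x, 0, z) * Real.exp (-2 * y)) z := (sliceZ ξ₃ (h3d (x, 0, z))).mul_const _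
    have heq : (fun t => ξ₃ (x, y, t)) = fun t => ξ₃ (x, 0, t) * Real.exp (-2 * y) :=
      funext fun t => hexp x y t
    exact (sliceZ ξ₃ (h3d (x, y, z))).unique (heq ▸ h2)
  have hfx : ∀ x y z : ℝ, pdx f (x, y, z) = pdx f (x, 0, z) := by
    intro x y z
    have heq : (fun t => f (t, y, z)) = fun t => f (t, 0, z) := funext fun t => hfconst t y z
    exact (sliceX f (hfd (x, y, z))).unique (heq ▸ sliceX f (hfd (x, 0, z)))
  -- the x-direction combined identity
  have hkey2 : ∀ p : Pt, pdx f p * (ξ₃ p * ξ₃ p * ξ₃ p)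
      - (1 - f p * (ξ₃ p * ξ₃ p)) * pdx ξ₃ p = 2 * (ξ₃ p * ξ₃ p) * pdz ξ₃ p := by
    intro p
    obtain ⟨C1, C2, C3⟩ := cond p
    have e1 : pdx f p * (ξ₃ p * ξ₃ p) + f p * (2 * ξ₃ p * pdx ξ₃ p)
        + 2 * pdx ξ₁ p * ξ₃ p + 2 * ξ₁ p * pdx ξ₃ p = 0 :=
      constr_d f ξ₁ ξ₃ hfd h1d h3d hconstr p ((1:ℝ),(0:ℝ),(0:ℝ))
    have e2 : pdx ξ₁ p + (pdx f p * ξ₃ p + f p * pdx ξ₃ p) = pdz ξ₃ p := by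
      have := expand p ((1:ℝ),(0:ℝ),(0:ℝ))
      exact (show pdx (fun q => ξ₁ q + f q * ξ₃ q) p
        = pdx ξ₁ p + (pdx f p * ξ₃ p + f p * pdx ξ₃ p) from this) ▸ C2
    linear_combination 2 * ξ₃ p ^ 2 * e2 - ξ₃ p * e1 + pdx ξ₃ p * hconstr p
  -- killing the x-dependence
  have hcx : ∀ x z : ℝ, pdx ξ₃ (x, 0, z) = 0 := by
    intro x z
    have P0 := hkey2 (x, 0, z)
    have P1 := hkey2 (x, 1, z)
    rw [hD3x x 1 z, hD3z x 1 z, hfx x 1 z, hexp x 1 z, hfconst x 1 z] at P1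
    set c := ξ₃ (x, 0, z) with hc
    set cx := pdx ξ₃ (x, 0, z) with hcxd
    set cz := pdz ξ₃ (x, 0, z) with hczd
    set Fx := pdx f (x, 0, z) with hFxd
    set F := f (x, 0, z) with hFd
    set e := Real.exp (-2 * 1) with hed
    have he0 : e ≠ 0 := Real.exp_ne_zero _
    have hKa : Fx * (c * c * c) + F * (c * c) * cx - 2 * (c * c) * cz = cx := by
      linear_combination P0
    have hKb : (Fx * (c * c * c) + F * (c * c) * cx - 2 * (c * c) * cz) * e ^ 2 = cx := by
      apply mul_left_cancel₀ he0
      linear_combination P1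
    have he1 : e ^ 2 ≠ 1 := by
      have : e ^ 2 < 1 := by
        rw [hed, ← Real.exp_nat_mul]
        · exact Real.exp_lt_one_iff.mpr (by norm_num)
      exact ne_of_lt this
    have : cx * e ^ 2 = cx := by linear_combination hKb - e ^ 2 * hKa
    have h0 : cx * (e ^ 2 - 1) = 0 := by linear_combination this
    rcases mul_eq_zero.mp h0 with h | h
    · exact h
    · exact absurd (by linarith [sub_eq_zero.mp h] : e ^ 2 = 1) he1
  have hFxc : ∀ x z : ℝ, pdx f (x, 0, z) * ξ₃ (x, 0, z) = 2 * pdz ξ₃ (x, 0, z) := by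
    intro x z
    have P0 := hkey2 (x, 0, z)
    rw [hcx x z] at P0
    have hc0 : ξ₃ (x, 0, z) ≠ 0 := ne_of_gt (hpos _)
    have h2 : ξ₃ (x, 0, z) ^ 2 * (pdx f (x, 0, z) * ξ₃ (x, 0, z))
        = ξ₃ (x, 0, z) ^ 2 * (2 * pdz ξ₃ (x, 0, z)) := by linear_combination P0
    exact mul_left_cancel₀ (pow_ne_zero 2 hc0) h2
  -- the y=0 slice of ξ₃ is independent of x
  have hcconst : ∀ x z : ℝ, ξ₃ (x, 0, z) = ξ₃ (0, 0, z) := by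
    intro x z
    refine is_const_of_deriv_eq_zero (f := fun t => ξ₃ (t, 0, z))
      (fun t => (sliceX ξ₃ (h3d (t, 0, z))).differentiableAt) (fun t => ?_) x 0
    have h := sliceX ξ₃ (h3d (t, 0, z))
    rw [hcx t z] at h
    exact h.deriv
  have hcz : ∀ x z : ℝ, pdz ξ₃ (x, 0, z) = pdz ξ₃ (0, 0, z) := by
    intro x z
    have heq : (fun t => ξ₃ (x, 0, t)) = fun t => ξ₃ (0, 0, t) := funext fun t => hcconst x t
    exact (sliceZ ξ₃ (h3d (x, 0, z))).unique (heq ▸ sliceZ ξ₃ (h3d (0, 0, z)))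
  have hψ' : ∀ z : ℝ, HasDerivAt (fun z => Real.log (ξ₃ (0, 0, z)))
      (pdz ξ₃ (0, 0, z) / ξ₃ (0, 0, z)) z := fun z =>
    (sliceZ ξ₃ (h3d (0, 0, z))).log (ne_of_gt (hpos _))
  have hdψ : ∀ z : ℝ, deriv (fun z => Real.log (ξ₃ (0, 0, z))) z
      = pdz ξ₃ (0, 0, z) / ξ₃ (0, 0, z) := fun z => (hψ' z).deriv
  have hι : ContDiff ℝ (⊤:ℕ∞) (fun z : ℝ => (((0:ℝ), (0:ℝ), z) : Pt)) :=
    contDiff_const.prodMk (contDiff_const.prodMk contDiff_id)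
  refine ⟨fun z => Real.log (ξ₃ (0, 0, z)), fun z => f (0, 0, z),
    (h3.comp hι).log (fun z => ne_of_gt (hpos _)), hf.comp hι, fun x y z => ⟨?_, ?_⟩⟩
  · rw [hexp x y z, hcconst x z, Real.exp_add, Real.exp_log (hpos _), mul_comm]
  · rw [hfconst x y z]
    have hpdxf : ∀ t : ℝ, pdx f (t, 0, z)
        = 2 * deriv (fun z => Real.log (ξ₃ (0, 0, z))) z := by
      intro t
      have h := hFxc t z
      rw [hcconst t z, hcz t z] at h
      have hb : ξ₃ (((0:ℝ), (0:ℝ), z) : Pt) ≠ 0 := ne_of_gt (hpos _)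
      rw [hdψ z]
      field_simp
      linarith
    have hg : ∀ t : ℝ, HasDerivAt
        (fun t => f (t, 0, z) - 2 * deriv (fun z => Real.log (ξ₃ (0, 0, z))) z * t) 0 t := by
      intro t
      have h := (sliceX f (hfd (t, 0, z))).sub
        ((hasDerivAt_id t).const_mul (2 * deriv (fun z => Real.log (ξ₃ (0, 0, z))) z))
      rw [hpdxf t] at h
      simpa [Pi.sub_def] using h
    have hconst := is_const_of_deriv_eq_zero
      (fun t => (hg t).differentiableAt) (fun t => (hg t).deriv) x 0
    simp only [mul_zero, sub_zero] at hconst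
    linarith [hconst]

noncomputable def pX : Pt →L[ℝ] ℝ := ContinuousLinearMap.fst ℝ ℝ (ℝ × ℝ)
noncomputable def pY : Pt →L[ℝ] ℝ :=
  (ContinuousLinearMap.fst ℝ ℝ ℝ).comp (ContinuousLinearMap.snd ℝ ℝ (ℝ × ℝ))
noncomputable def pZ : Pt →L[ℝ] ℝ :=
  (ContinuousLinearMap.snd ℝ ℝ ℝ).comp (ContinuousLinearMap.snd ℝ ℝ (ℝ × ℝ))

@[simp] lemma pX_apply (v : Pt) : pX v = v.1 := rfl
@[simp] lemma pY_apply (v : Pt) : pY v = v.2.1 := rfl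
@[simp] lemma pZ_apply (v : Pt) : pZ v = v.2.2 := rfl

lemma backward (f ξ₁ ξ₃ : Pt → ℝ)
    (hconstr : ∀ p : Pt, f p * ξ₃ p ^ 2 + 2 * ξ₁ p * ξ₃ p = 1)
    (ψ m : ℝ → ℝ) (hψ : ContDiff ℝ (⊤ : ℕ∞) ψ) (hm : ContDiff ℝ (⊤ : ℕ∞) m)
    (hform : ∀ x y z : ℝ, ξ₃ (x, y, z) = Real.exp (-2 * y + ψ z) ∧
        f (x, y, z) = 2 * deriv ψ z * x + m z) :
    ∀ p : Pt, pdy ξ₃ p = -2 * ξ₃ p ∧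
      pdx (fun q => ξ₁ q + f q * ξ₃ q) p = pdz ξ₃ p ∧
      pdy (fun q => ξ₁ q + f q * ξ₃ q) p = 2 * ξ₁ p := by
  have hψd : Differentiable ℝ ψ := hψ.differentiable (by simp)
  have hψ'd : Differentiable ℝ (deriv ψ) :=
    ((contDiff_infty_iff_deriv.mp hψ).2).differentiable (by simp)
  have hmd : Differentiable ℝ m := hm.differentiable (by simp)
  have hξ : ξ₃ = fun p : Pt => Real.exp (-2 * p.2.1 + ψ p.2.2) :=
    funext fun p => (hform p.1 p.2.1 p.2.2).1
  have hff : f = fun p : Pt => 2 * deriv ψ p.2.2 * p.1 + m p.2.2 :=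
    funext fun p => (hform p.1 p.2.1 p.2.2).2
  intro p
  -- derivative structure of ξ₃
  have hz2 : HasFDerivAt (fun q : Pt => q.2.2) pZ p := pZ.hasFDerivAt
  have hy2 : HasFDerivAt (fun q : Pt => q.2.1) pY p := pY.hasFDerivAt
  have hx2 : HasFDerivAt (fun q : Pt => q.1) pX p := pX.hasFDerivAt
  have hψz : HasFDerivAt (fun q : Pt => ψ q.2.2) (deriv ψ p.2.2 • pZ) p :=
    (hψd p.2.2).hasDerivAt.comp_hasFDerivAt p hz2
  have hψ'z : HasFDerivAt (fun q : Pt => deriv ψ q.2.2) (deriv (deriv ψ) p.2.2 • pZ) p :=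
    by exact (hψ'd p.2.2).hasDerivAt.comp_hasFDerivAt p hz2
  have hmz : HasFDerivAt (fun q : Pt => m q.2.2) (deriv m p.2.2 • pZ) p :=
    (hmd p.2.2).hasDerivAt.comp_hasFDerivAt p hz2
  have hL : HasFDerivAt (fun q : Pt => -2 * q.2.1 + ψ q.2.2)
      (((-2:ℝ) • pY) + deriv ψ p.2.2 • pZ) p := (hy2.const_mul (-2)).add hψz
  have hX3 : HasFDerivAt (fun q : Pt => Real.exp (-2 * q.2.1 + ψ q.2.2))
      (Real.exp (-2 * p.2.1 + ψ p.2.2) • (((-2:ℝ) • pY) + deriv ψ p.2.2 • pZ)) p := hL.exp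
  -- derivative structure of the model f
  have hFm : HasFDerivAt (fun q : Pt => 2 * deriv ψ q.2.2 * q.1 + m q.2.2)
      (((2 * deriv ψ p.2.2) • pX + p.1 • ((2:ℝ) • (deriv (deriv ψ) p.2.2 • pZ)))
        + deriv m p.2.2 • pZ) p := ((hψ'z.const_mul 2).mul hx2).add hmz
  -- derivative structure of A := ξ₁ + f ξ₃
  have hM : HasFDerivAt (fun q : Pt => 2 * q.2.1 - ψ q.2.2)
      (((2:ℝ) • pY) - deriv ψ p.2.2 • pZ) p := (hy2.const_mul 2).sub hψz
  have hXM : HasFDerivAt (fun q : Pt => Real.exp (2 * q.2.1 - ψ q.2.2))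
      (Real.exp (2 * p.2.1 - ψ p.2.2) • (((2:ℝ) • pY) - deriv ψ p.2.2 • pZ)) p := hM.exp
  have hAeq : (fun q => ξ₁ q + f q * ξ₃ q)
      = fun q : Pt => (1/2) * Real.exp (2 * q.2.1 - ψ q.2.2)
        + (1/2) * ((2 * deriv ψ q.2.2 * q.1 + m q.2.2) * Real.exp (-2 * q.2.1 + ψ q.2.2)) := by
    funext q
    have hc := hconstr q
    have hq3 : ξ₃ q = Real.exp (-2 * q.2.1 + ψ q.2.2) := (hform q.1 q.2.1 q.2.2).1
    have hqf : f q = 2 * deriv ψ q.2.2 * q.1 + m q.2.2 := (hform q.1 q.2.1 q.2.2).2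
    have hinv : Real.exp (2 * q.2.1 - ψ q.2.2) * Real.exp (-2 * q.2.1 + ψ q.2.2) = 1 := by
      rw [← Real.exp_add]
      norm_num
    rw [hq3, hqf] at hc
    rw [hq3, hqf]
    apply mul_right_cancel₀ (Real.exp_ne_zero (-2 * q.2.1 + ψ q.2.2))
    linear_combination (1/2) * hc - (1/2) * hinv
  have hA : HasFDerivAt (fun q => ξ₁ q + f q * ξ₃ q)
      ((1/2 : ℝ) • (Real.exp (2 * p.2.1 - ψ p.2.2) • (((2:ℝ) • pY) - deriv ψ p.2.2 • pZ))
        + (1/2 : ℝ) • ((2 * deriv ψ p.2.2 * p.1 + m p.2.2) •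
              (Real.exp (-2 * p.2.1 + ψ p.2.2) • (((-2:ℝ) • pY) + deriv ψ p.2.2 • pZ))
            + Real.exp (-2 * p.2.1 + ψ p.2.2) •
              (((2 * deriv ψ p.2.2) • pX + p.1 • ((2:ℝ) • (deriv (deriv ψ) p.2.2 • pZ)))
                + deriv m p.2.2 • pZ))) p := by
    rw [hAeq]
    exact (hXM.const_mul (1/2)).add ((hFm.mul hX3).const_mul (1/2))
  have hq3 : ξ₃ p = Real.exp (-2 * p.2.1 + ψ p.2.2) := (hform p.1 p.2.1 p.2.2).1
  have hqf : f p = 2 * deriv ψ p.2.2 * p.1 + m p.2.2 := (hform p.1 p.2.1 p.2.2).2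
  have hinv : Real.exp (2 * p.2.1 - ψ p.2.2) * Real.exp (-2 * p.2.1 + ψ p.2.2) = 1 := by
    rw [← Real.exp_add]; norm_num
  refine ⟨?_, ?_, ?_⟩
  · show fderiv ℝ ξ₃ p ((0:ℝ),(1:ℝ),(0:ℝ)) = -2 * ξ₃ p
    rw [hξ, hX3.fderiv]
    simp only [ContinuousLinearMap.add_apply, ContinuousLinearMap.sub_apply,
      ContinuousLinearMap.smul_apply, pX_apply, pY_apply, pZ_apply, smul_eq_mul]
    ring
  · show fderiv ℝ (fun q => ξ₁ q + f q * ξ₃ q) p ((1:ℝ),(0:ℝ),(0:ℝ))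
      = fderiv ℝ ξ₃ p ((0:ℝ),(0:ℝ),(1:ℝ))
    rw [hA.fderiv]
    conv_rhs => rw [hξ]
    rw [hX3.fderiv]
    simp only [ContinuousLinearMap.add_apply, ContinuousLinearMap.sub_apply,
      ContinuousLinearMap.smul_apply, pX_apply, pY_apply, pZ_apply, smul_eq_mul]
    ring
  · show fderiv ℝ (fun q => ξ₁ q + f q * ξ₃ q) p ((0:ℝ),(1:ℝ),(0:ℝ)) = 2 * ξ₁ p
    rw [hA.fderiv]
    simp only [ContinuousLinearMap.add_apply, ContinuousLinearMap.sub_apply,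
      ContinuousLinearMap.smul_apply, pX_apply, pY_apply, pZ_apply, smul_eq_mul]
    have hc := hconstr p
    rw [hq3, hqf] at hc
    have h3 : Real.exp (-2 * p.2.1 + ψ p.2.2) ≠ 0 := Real.exp_ne_zero _
    apply mul_right_cancel₀ h3
    linear_combination hinv - hc

/-- Theorem 4.2: an almost paracontact metric 3-dimensional Walker manifold with
`ξ₂ ≡ 0` (and `ξ₃ > 0`) is paracontact metric iff `ξ₃ = exp(-2y + ψ(z))` and
`f = 2ψ'(z)·x + m(z)` for some smooth functions `ψ, m : ℝ → ℝ`. -/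
theorem paracontact_metric_iff (f ξ₁ ξ₃ : Pt → ℝ)
    (hf : ContDiff ℝ (⊤ : ℕ∞) f) (h1 : ContDiff ℝ (⊤ : ℕ∞) ξ₁)
    (h3 : ContDiff ℝ (⊤ : ℕ∞) ξ₃)
    (hconstr : ∀ p : Pt, f p * ξ₃ p ^ 2 + 2 * ξ₁ p * ξ₃ p = 1)
    (hpos : ∀ p : Pt, 0 < ξ₃ p) :
    (∀ (i j : Fin 3) (p : Pt),
        deta f ξ₁ zeroF ξ₃ i j p = Phi2 f ξ₁ zeroF ξ₃ (E i) (E j) p) ↔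
    ∃ ψ m : ℝ → ℝ, ContDiff ℝ (⊤ : ℕ∞) ψ ∧ ContDiff ℝ (⊤ : ℕ∞) m ∧
      ∀ x y z : ℝ, ξ₃ (x, y, z) = Real.exp (-2 * y + ψ z) ∧
        f (x, y, z) = 2 * deriv ψ z * x + m z := by
  rw [key f ξ₁ ξ₃]
  constructor
  · exact forward f ξ₁ ξ₃ hf h1 h3 hconstr hpos
  · rintro ⟨ψ, m, hψ, hm, hfm⟩
    exact backward f ξ₁ ξ₃ hconstr ψ m hψ hm hfm
end

section
/- Let f : ℝ³ → ℝ be smooth with f > 0 everywhere, and consider the almost paracontact metric Walker structure with ξ₁ ≡ 0, ξ₂ ≡ 0, ξ₃ = 1/√f (so ξ = (1/√f)∂z, η = (1/√f)dx + √f dz, φ∂x = (1/√f)∂y, φ∂y = √f ∂x − (1/√f)∂z, φ∂z = 0). Then the structure lies strictly in the basic class G₁₂ — i.e. F is nonzero at every point and F(X,Y,Z) = η(X)(η(Y)F(ξ,ξ,Z) − η(Z)F(ξ,ξ,Y)) for all vector fields X,Y,Z — if and only if f_y ≡ 0, f_z ≡ 0 and f_x vanishes nowhere (Theorem 4.3(iii)).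 -/
open Real

/-- The coordinate `ξ₃ = 1/√f` of the structure of Theorem 4.3. -/
noncomputable def xi3s (f : Pt → ℝ) : Pt → ℝ := fun p => 1 / Real.sqrt (f p)

/-- The Reeb vector field `ξ = (1/√f)∂z`. -/
noncomputable def xiVs (f : Pt → ℝ) : VF := fun p => ((0:ℝ), (0:ℝ), 1 / Real.sqrt (f p))


/-- Closed-form expression for the structure tensor of Theorem 4.3. -/
noncomputable def Fexp (f : Pt → ℝ) (p u v w : Pt) : ℝ :=
  (pdy f p * c3 u * (c1 v + f p * c3 v) / (2 * Real.sqrt (f p))) * c3 w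
  + (-(c1 v * (c1 u * pdx f p + c2 u * pdy f p + c3 u * pdz f p))
        / (2 * f p * Real.sqrt (f p))
     - (pdx f p * (c1 u * c3 v + c3 u * c1 v) + pdy f p * (c2 u * c3 v)
        + (f p * pdx f p + pdz f p) * (c3 u * c3 v)) / (2 * Real.sqrt (f p))) * c2 w
  + ((c2 v * (c1 u * pdx f p + c2 u * pdy f p + c3 u * pdz f p))
        / (2 * f p * Real.sqrt (f p))
     + (pdx f p * (c3 u * c2 v) - pdy f p * (c3 u * c3 v)) / (2 * Real.sqrt (f p)))
    * (c1 w + f p * c3 w)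

lemma master (f : Pt → ℝ) (hf : ContDiff ℝ (⊤ : ℕ∞) f) (hfpos : ∀ p : Pt, 0 < f p)
    (X Y Z : VF) (hY : ContDiff ℝ (⊤ : ℕ∞) Y) (p : Pt) :
    Ften f zeroF zeroF (xi3s f) X Y Z p = Fexp f p (X p) (Y p) (Z p) := by
  have hfp := hfpos p
  have hsp : 0 < Real.sqrt (f p) := Real.sqrt_pos.2 hfp
  have hsne : Real.sqrt (f p) ≠ 0 := ne_of_gt hsp
  have hane : f p ≠ 0 := ne_of_gt hfp
  have hss : Real.sqrt (f p) * Real.sqrt (f p) = f p := Real.mul_self_sqrt hfp.le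
  have hfd : DifferentiableAt ℝ f p := (hf.differentiable (by simp)) p
  have hYd : DifferentiableAt ℝ Y p := (hY.differentiable (by simp)) p
  have hY1 : HasFDerivAt (fun q => (Y q).1) (fderiv ℝ (fun q => (Y q).1) p) p :=
    (hYd.fst).hasFDerivAt
  have hY2 : HasFDerivAt (fun q => (Y q).2.1) (fderiv ℝ (fun q => (Y q).2.1) p) p :=
    (hYd.snd.fst).hasFDerivAt
  have hs : HasFDerivAt (fun q => Real.sqrt (f q))
      ((1 / (2 * Real.sqrt (f p))) • fderiv ℝ f p) p := hfd.hasFDerivAt.sqrt hane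
  have hsi : HasFDerivAt (fun q => (Real.sqrt (f q))⁻¹)
      (-(Real.sqrt (f p) ^ 2)⁻¹ • (1 / (2 * Real.sqrt (f p))) • fderiv ℝ f p) p :=
    (hasDerivAt_inv hsne).comp_hasFDerivAt p hs
  have hC1 : (fun q => c1 (phiV f zeroF zeroF (xi3s f) Y q))
      = fun q => Real.sqrt (f q) * (Y q).2.1 := by
    funext q
    have h : f q * (Real.sqrt (f q))⁻¹ = Real.sqrt (f q) := by
      have h2 := Real.mul_self_sqrt (hfpos q).le
      field_simp
      try linarith
      rw [div_eq_iff (ne_of_gt (Real.sqrt_pos.2 (hfpos q))), h2]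
    simp [phiV, zeroF, xi3s, c1, c2, c3, one_div, h]
  have hC2 : (fun q => c2 (phiV f zeroF zeroF (xi3s f) Y q))
      = fun q => (Real.sqrt (f q))⁻¹ * (Y q).1 := by
    funext q; simp [phiV, zeroF, xi3s, c1, c2, c3, one_div]
  have hC3 : (fun q => c3 (phiV f zeroF zeroF (xi3s f) Y q))
      = fun q => -((Real.sqrt (f q))⁻¹ * (Y q).2.1) := by
    funext q; simp [phiV, zeroF, xi3s, c1, c2, c3, one_div]
  have h1 : fderiv ℝ (fun q => Real.sqrt (f q) * (Y q).2.1) p = _ := (hs.mul hY2).fderiv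
  have h2 : fderiv ℝ (fun q => (Real.sqrt (f q))⁻¹ * (Y q).1) p = _ := (hsi.mul hY1).fderiv
  have h3 : fderiv ℝ (fun q => -((Real.sqrt (f q))⁻¹ * (Y q).2.1)) p = _ :=
    ((hsi.mul hY2).neg).fderiv
  have hD : fderiv ℝ f p (X p)
      = c1 (X p) * pdx f p + c2 (X p) * pdy f p + c3 (X p) * pdz f p := by
    have hx : X p = c1 (X p) • ((1:ℝ), (0:ℝ), (0:ℝ)) + c2 (X p) • ((0:ℝ), (1:ℝ), (0:ℝ))
        + c3 (X p) • ((0:ℝ), (0:ℝ), (1:ℝ)) := by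
      simp [c1, c2, c3, Prod.ext_iff]
    rw [hx, map_add, map_add, map_smul, map_smul, map_smul]
    simp [pdx, pdy, pdz, c1, c2, c3]; try ring
  simp only [Ften, gm, cov, dd]
  rw [hC1, hC2, hC3, h1, h2, h3]
  simp only [Fexp, phiV, cov, dd, zeroF, xi3s, c1, c2, c3, ContinuousLinearMap.add_apply,
    ContinuousLinearMap.smul_apply, ContinuousLinearMap.neg_apply, smul_eq_mul,
    Prod.fst_sub, Prod.snd_sub, one_div]
  rw [hD]
  simp only [c1, c2, c3]
  set s : ℝ := Real.sqrt (f p) with hsdef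
  rw [show f p = s * s from hss.symm]
  field_simp
  ring

lemma hE_smooth (i : Fin 3) : ContDiff ℝ (⊤ : ℕ∞) (E i) := by
  fin_cases i <;>
    · have h : ∀ v : Pt, ContDiff ℝ (⊤ : ℕ∞) (fun _ : Pt => v) := fun v => contDiff_const
      simpa [E] using h _

lemma hxiV_smooth (f : Pt → ℝ) (hf : ContDiff ℝ (⊤ : ℕ∞) f) (hfpos : ∀ p : Pt, 0 < f p) :
    ContDiff ℝ (⊤ : ℕ∞) (xiVs f) := by
  have h3 : ContDiff ℝ (⊤ : ℕ∞) (fun p : Pt => 1 / Real.sqrt (f p)) := by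
    rw [contDiff_iff_contDiffAt]
    intro p
    simp only [one_div]
    exact (hf.contDiffAt.sqrt (ne_of_gt (hfpos p))).inv
      (ne_of_gt (Real.sqrt_pos.2 (hfpos p)))
  exact contDiff_const.prodMk (contDiff_const.prodMk h3)


/-- Theorem 4.3(iii): the structure with `ξ₁ = ξ₂ = 0`, `ξ₃ = 1/√f` lies strictly in
the class `G₁₂` iff `f_y ≡ 0`, `f_z ≡ 0` and `f_x` vanishes nowhere. -/
theorem G12_iff (f : Pt → ℝ) (hf : ContDiff ℝ (⊤ : ℕ∞) f) (hfpos : ∀ p : Pt, 0 < f p) :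
    ((∀ p : Pt, ∃ i j k : Fin 3, Ften f zeroF zeroF (xi3s f) (E i) (E j) (E k) p ≠ 0) ∧
      (∀ X Y Z : VF, ContDiff ℝ (⊤ : ℕ∞) X → ContDiff ℝ (⊤ : ℕ∞) Y →
        ContDiff ℝ (⊤ : ℕ∞) Z → ∀ p : Pt,
          Ften f zeroF zeroF (xi3s f) X Y Z p =
            etaV f zeroF zeroF (xi3s f) X p *
              (etaV f zeroF zeroF (xi3s f) Y p *
                  Ften f zeroF zeroF (xi3s f) (xiVs f) (xiVs f) Z p -
                etaV f zeroF zeroF (xi3s f) Z p *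
                  Ften f zeroF zeroF (xi3s f) (xiVs f) (xiVs f) Y p))) ↔
    ((∀ p : Pt, pdy f p = 0) ∧ (∀ p : Pt, pdz f p = 0) ∧ (∀ p : Pt, pdx f p ≠ 0)) := by
  have hxiV := hxiV_smooth f hf hfpos
  constructor
  · rintro ⟨hnz, hid⟩
    have hfy : ∀ p : Pt, pdy f p = 0 := by
      intro p
      have h := hid (E 1) (E 0) (E 1) (hE_smooth 1) (hE_smooth 0) (hE_smooth 1) p
      rw [master f hf hfpos (E 1) (E 0) (E 1) (hE_smooth 0) p] at h
      have hfp := hfpos p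
      have hsne : Real.sqrt (f p) ≠ 0 := ne_of_gt (Real.sqrt_pos.2 hfp)
      have hane : f p ≠ 0 := ne_of_gt hfp
      simp only [Fexp, etaV, zeroF, xi3s, E, Matrix.cons_val_zero, Matrix.cons_val_one,
        Matrix.head_cons, c1, c2, c3, one_div] at h
      field_simp at h
      have h' : Real.sqrt (f p) * pdy f p = 0 := by linear_combination -h
      exact (mul_eq_zero.1 h').resolve_left hsne
    have hfz : ∀ p : Pt, pdz f p = 0 := by
      intro p
      have h := hid (E 0) (E 0) (E 1) (hE_smooth 0) (hE_smooth 0) (hE_smooth 1) p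
      rw [master f hf hfpos (E 0) (E 0) (E 1) (hE_smooth 0) p,
        master f hf hfpos (xiVs f) (xiVs f) (E 1) hxiV p,
        master f hf hfpos (xiVs f) (xiVs f) (E 0) hxiV p] at h
      have hfp := hfpos p
      have hsne : Real.sqrt (f p) ≠ 0 := ne_of_gt (Real.sqrt_pos.2 hfp)
      have hss : Real.sqrt (f p) * Real.sqrt (f p) = f p := Real.mul_self_sqrt hfp.le
      simp only [Fexp, etaV, zeroF, xi3s, xiVs, E, Matrix.cons_val_zero, Matrix.cons_val_one,
        Matrix.head_cons, c1, c2, c3, one_div, hfy] at h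
      set s : ℝ := Real.sqrt (f p) with hsdef
      rw [show f p = s * s from hss.symm] at h
      field_simp at h
      have hsne2 : s ≠ 0 := hsne
      have h2 : pdz f p * (2 * s * s * s) = 0 := by nlinarith [h]
      have := mul_ne_zero (mul_ne_zero (mul_ne_zero (two_ne_zero (α := ℝ)) hsne2) hsne2) hsne2
      exact (mul_eq_zero.1 h2).resolve_right this
    refine ⟨hfy, hfz, ?_⟩
    intro p hfx0
    obtain ⟨i, j, k, hne⟩ := hnz p
    rw [master f hf hfpos (E i) (E j) (E k) (hE_smooth j) p] at hne
    exact hne (by simp [Fexp, hfy, hfz, hfx0])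
  · rintro ⟨hfy, hfz, hfx⟩
    constructor
    · intro p
      refine ⟨0, 1, 0, ?_⟩
      rw [master f hf hfpos (E 0) (E 1) (E 0) (hE_smooth 1) p]
      have hfp := hfpos p
      have hsne : Real.sqrt (f p) ≠ 0 := ne_of_gt (Real.sqrt_pos.2 hfp)
      have hane : f p ≠ 0 := ne_of_gt hfp
      simp only [Fexp, E, Matrix.cons_val_zero, Matrix.cons_val_one, Matrix.head_cons,
        c1, c2, c3, hfy, hfz]
      intro h
      apply hfx p
      field_simp at h
      linear_combination h
    · intro X Y Z hX hY hZ p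
      rw [master f hf hfpos X Y Z hY p, master f hf hfpos (xiVs f) (xiVs f) Z hxiV p,
        master f hf hfpos (xiVs f) (xiVs f) Y hxiV p]
      have hfp := hfpos p
      have hsne : Real.sqrt (f p) ≠ 0 := ne_of_gt (Real.sqrt_pos.2 hfp)
      have hss : Real.sqrt (f p) * Real.sqrt (f p) = f p := Real.mul_self_sqrt hfp.le
      simp only [Fexp, etaV, zeroF, xi3s, xiVs, c1, c2, c3, hfy, hfz, one_div]
      set s : ℝ := Real.sqrt (f p) with hsdef
      rw [show f p = s * s from hss.symm]
      field_simp
      ring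
end

section
/- Consider the almost paracontact metric Walker structure on ℝ³ with ξ₂ ≡ 1, ξ₃ ≡ 0 and an arbitrary smooth function ξ₁ : ℝ³ → ℝ (so ξ = ξ₁∂x + ∂y, η = dy + ξ₁ dz, φ∂x = −∂x, φ∂y = ξ₁∂x, φ∂z = −f∂x − ξ₁∂y + ∂z). Then the structure is paracosymplectic, i.e. F(∂i,∂j,∂k) = 0 at every point for all coordinate fields (equivalently ∇φ = 0, the class G₀), if and only if (ξ₁)_x ≡ 0, (ξ₁)_y ≡ 0 and 2(ξ₁)_z + ξ₁ f_x + f_y ≡ 0 on ℝ³ (Theorem 4.4(ii)). -/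
open Real

lemma E0eq : E 0 = fun _ => ((1:ℝ), (0:ℝ), (0:ℝ)) := rfl
lemma E1eq : E 1 = fun _ => ((0:ℝ), (1:ℝ), (0:ℝ)) := rfl
lemma E2eq : E 2 = fun _ => ((0:ℝ), (0:ℝ), (1:ℝ)) := rfl

lemma F012eq (f ξ₁ : Pt → ℝ) (p : Pt) :
    Ften f ξ₁ oneF zeroF (E 0) (E 1) (E 2) p = pdx ξ₁ p := by
  simp [Ften, gm, cov, phiV, dd, c1, c2, c3, oneF, zeroF, E0eq, E1eq, E2eq, pdx,
    Prod.fst_sub, Prod.snd_sub, fderiv_neg]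

lemma F112eq (f ξ₁ : Pt → ℝ) (p : Pt) :
    Ften f ξ₁ oneF zeroF (E 1) (E 1) (E 2) p = pdy ξ₁ p := by
  simp [Ften, gm, cov, phiV, dd, c1, c2, c3, oneF, zeroF, E0eq, E1eq, E2eq, pdy,
    Prod.fst_sub, Prod.snd_sub, fderiv_neg]

lemma F212eq (f ξ₁ : Pt → ℝ) (p : Pt) :
    Ften f ξ₁ oneF zeroF (E 2) (E 1) (E 2) p
      = pdz ξ₁ p + (1/2) * pdy f p + (1/2) * ξ₁ p * pdx f p := by
  simp [Ften, gm, cov, phiV, dd, c1, c2, c3, oneF, zeroF, E0eq, E1eq, E2eq,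
    pdx, pdy, pdz, Prod.fst_sub, Prod.snd_sub, fderiv_neg]
  ring

set_option maxHeartbeats 1000000 in
/-- Theorem 4.4(ii): the structure with `ξ₂ ≡ 1`, `ξ₃ ≡ 0` is paracosymplectic
(`F ≡ 0`, the class `G₀`) iff `(ξ₁)_x ≡ 0`, `(ξ₁)_y ≡ 0` and
`2(ξ₁)_z + ξ₁ f_x + f_y ≡ 0`. -/
theorem paracosymplectic_iff (f ξ₁ : Pt → ℝ)
    (hf : ContDiff ℝ (⊤ : ℕ∞) f) (h1 : ContDiff ℝ (⊤ : ℕ∞) ξ₁) :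
    (∀ (i j k : Fin 3) (p : Pt), Ften f ξ₁ oneF zeroF (E i) (E j) (E k) p = 0) ↔
    ((∀ p : Pt, pdx ξ₁ p = 0) ∧ (∀ p : Pt, pdy ξ₁ p = 0) ∧
      (∀ p : Pt, 2 * pdz ξ₁ p + ξ₁ p * pdx f p + pdy f p = 0)) := by
  constructor
  · intro h
    refine ⟨fun p => ?_, fun p => ?_, fun p => ?_⟩
    · have := h 0 1 2 p
      rw [F012eq] at this
      exact this
    · have := h 1 1 2 p
      rw [F112eq] at this
      exact this
    · have := h 2 1 2 p
      rw [F212eq] at this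
      linarith
  · rintro ⟨hx, hy, hz⟩ i j k p
    have h1 := hx p; have h2 := hy p; have h3 := hz p
    simp only [pdx, pdy, pdz] at h1 h2 h3
    fin_cases i <;> fin_cases j <;> fin_cases k <;>
      simp [Ften, gm, cov, phiV, dd, c1, c2, c3, oneF, zeroF, E0eq, E1eq, E2eq,
        pdx, pdy, pdz, Prod.fst_sub, Prod.snd_sub, fderiv_neg, h1, h2] <;>
      linarith
end

section
/- Consider the almost paracontact metric Walker structure on ℝ³ with ξ₂ ≡ −1, ξ₃ ≡ 0 and an arbitrary smooth function ξ₁ : ℝ³ → ℝ (so ξ = ξ₁∂x − ∂y, η = −dy + ξ₁ dz, φ∂x = ∂x, φ∂y = ξ₁∂x, φ∂z = f∂x − ξ₁∂y − ∂z). Then the structure is paracosymplectic, i.e. F(∂i,∂j,∂k) = 0 at every point for all coordinate fields (equivalently ∇φ = 0, the class G₀), if and only if (ξ₁)_x ≡ 0, (ξ₁)_y ≡ 0 and 2(ξ₁)_z + ξ₁ f_x − f_y ≡ 0 on ℝ³ (Theorem 4.5(ii)). -/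
open Real

set_option maxHeartbeats 1600000 in
/-- Master evaluation of the structure tensor for `ξ₂ ≡ -1`, `ξ₃ ≡ 0`. -/
lemma Ften_master (f ξ₁ : Pt → ℝ) (i j k : Fin 3) (p : Pt) :
    Ften f ξ₁ negOneF zeroF (E i) (E j) (E k) p =
      (dd (E i) ξ₁ p + (1/2) * (ξ₁ p * pdx f p - pdy f p) * c3 (E i p))
        * (c2 (E j p) * c3 (E k p) - c3 (E j p) * c2 (E k p)) := by
  fin_cases i <;> fin_cases j <;> fin_cases k <;>
    simp [Ften, gm, cov, phiV, E, dd, c1, c2, c3, negOneF, zeroF, pdx, pdy, pdz,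
      fderiv_const, fderiv_neg, mul_neg_one, sub_neg_eq_add] <;>
    ring

/-- Theorem 4.5(ii): the structure with `ξ₂ ≡ -1`, `ξ₃ ≡ 0` is paracosymplectic
(`F ≡ 0`, the class `G₀`) iff `(ξ₁)_x ≡ 0`, `(ξ₁)_y ≡ 0` and
`2(ξ₁)_z + ξ₁ f_x - f_y ≡ 0`. -/
theorem paracosymplectic_iff_neg (f ξ₁ : Pt → ℝ)
    (hf : ContDiff ℝ (⊤ : ℕ∞) f) (h1 : ContDiff ℝ (⊤ : ℕ∞) ξ₁) :
    (∀ (i j k : Fin 3) (p : Pt), Ften f ξ₁ negOneF zeroF (E i) (E j) (E k) p = 0) ↔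
    ((∀ p : Pt, pdx ξ₁ p = 0) ∧ (∀ p : Pt, pdy ξ₁ p = 0) ∧
      (∀ p : Pt, 2 * pdz ξ₁ p + ξ₁ p * pdx f p - pdy f p = 0)) := by
  constructor
  · intro h
    refine ⟨fun p => ?_, fun p => ?_, fun p => ?_⟩
    · have := h 0 1 2 p
      rw [Ften_master] at this
      simpa [dd, E, c1, c2, c3, pdx] using this
    · have := h 1 1 2 p
      rw [Ften_master] at this
      simpa [dd, E, c1, c2, c3, pdy] using this
    · have := h 2 1 2 p
      rw [Ften_master] at this
      simp [dd, E, c1, c2, c3, pdz, pdx, pdy] at this ⊢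
      linarith
  · rintro ⟨hx, hy, hz⟩ i j k p
    rw [Ften_master]
    have hA : dd (E i) ξ₁ p + (1/2) * (ξ₁ p * pdx f p - pdy f p) * c3 (E i p) = 0 := by
      fin_cases i
      · simpa [dd, E, c1, c2, c3, pdx] using hx p
      · simpa [dd, E, c1, c2, c3, pdy] using hy p
      · have := hz p
        simp [pdx, pdy, pdz] at this
        simp [dd, E, c1, c2, c3, pdx, pdy, pdz]
        linarith
    rw [hA, zero_mul]
end
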